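/- arXiv:2412.02462 — 6 statements merged into one kernel-verified Lean document; each statement's English description precedes it below -/
import Mathlib

section
/- Let k be a nonnegative integer, let u > 0 and t ∈ (0,1), and suppose that G_k(u;t) := k!·Σ_{n≥0} u^{n−k}·t^{(n−k)²/2}/n! ≤ 2 (this series converges for all such u, t). Then for every q ∈ ℂ with 0 < |q| < t, setting r := u·|q|^{1/2−k}, the function x ↦ f(x;q) has no zeros on the circle |x| = r, its zero set inside the open disk |x| < r is finite, and the sum over this zero set of the analytic orders of vanishing of f(·;q) equals k. -/
/-- The deformed exponential function `f(x;q) = ∑_{n≥0} x^n q^(n(n-1)/2) / n!`. -/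
noncomputable def deformedExp (x q : ℂ) : ℂ :=
  ∑' n : ℕ, x ^ n * q ^ (n * (n - 1) / 2) / (n.factorial : ℂ)

/-- The analytic order of vanishing of `g` at `z` (junk value `0` if `g` is not analytic at `z`). -/
noncomputable def vanishingOrder (g : ℂ → ℂ) (z : ℂ) : ℕ∞ :=
  @dite _ (AnalyticAt ℂ g z) (Classical.dec _) (fun _ => analyticOrderAt g z) (fun _ => 0)

open Complex Metric Set Filter Topology

noncomputable def Complex.abs : AbsoluteValue ℂ ℝ := NormedField.toAbsoluteValue ℂ

lemma Complex.norm_eq_abs (z : ℂ) : ‖z‖ = Complex.abs z := rfl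

lemma Complex.abs_ofReal (r : ℝ) : Complex.abs (r : ℂ) = |r| := by
  rw [← Complex.norm_eq_abs]; simp

lemma Complex.abs_natCast (n : ℕ) : Complex.abs (n : ℂ) = n := by
  rw [← Complex.norm_eq_abs]; simp


lemma vanishingOrder_eq {f : ℂ → ℂ} {z : ℂ} (hf : AnalyticAt ℂ f z) :
    vanishingOrder f z = analyticOrderAt f z := by
  unfold vanishingOrder
  rw [dif_pos hf]

noncomputable def nOrd (f : ℂ → ℂ) (z : ℂ) : ℕ := (vanishingOrder f z).toNat

lemma order_ne_top {f : ℂ → ℂ} (hf : Differentiable ℂ f) (hsome : ∃ z, f z ≠ 0) (w : ℂ) :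
    vanishingOrder f w ≠ ⊤ := by
  rw [vanishingOrder_eq (hf.analyticAt w)]
  intro h
  rw [analyticOrderAt_eq_top] at h
  obtain ⟨z, hz⟩ := hsome
  have hA : AnalyticOnNhd ℂ f univ := fun x _ => hf.analyticAt x
  exact hz ((hA.eqOn_zero_of_preconnected_of_eventuallyEq_zero isPreconnected_univ
    (mem_univ w) h) (mem_univ z))

lemma vanishingOrder_eq_nOrd {f : ℂ → ℂ} (hf : Differentiable ℂ f) (hsome : ∃ z, f z ≠ 0)
    (w : ℂ) : vanishingOrder f w = (nOrd f w : ℕ∞) :=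
  (ENat.coe_toNat (order_ne_top hf hsome w)).symm

lemma nOrd_spec {f : ℂ → ℂ} (hf : Differentiable ℂ f) (hsome : ∃ z, f z ≠ 0) (w : ℂ) :
    ∃ g : ℂ → ℂ, AnalyticAt ℂ g w ∧ g w ≠ 0 ∧
      ∀ᶠ z in 𝓝 w, f z = (z - w) ^ (nOrd f w) * g z := by
  have h : analyticOrderAt f w = ((nOrd f w : ℕ) : ℕ∞) := by
    rw [← vanishingOrder_eq (hf.analyticAt w), vanishingOrder_eq_nOrd hf hsome w]
  obtain ⟨g, hg, hg0, hev⟩ := (hf.analyticAt w).analyticOrderAt_eq_natCast.mp h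
  exact ⟨g, hg, hg0, by simpa [smul_eq_mul] using hev⟩

lemma nOrd_pos {f : ℂ → ℂ} (hf : Differentiable ℂ f) (hsome : ∃ z, f z ≠ 0) {w : ℂ}
    (hw : f w = 0) : 1 ≤ nOrd f w := by
  by_contra h
  obtain ⟨g, _, hg0, hev⟩ := nOrd_spec hf hsome w
  rw [Nat.lt_one_iff.mp (not_le.mp h)] at hev
  have := hev.self_of_nhds
  simp only [pow_zero, one_mul] at this
  exact hg0 (this ▸ hw)

lemma nOrd_eq_zero {f : ℂ → ℂ} (hf : AnalyticAt ℂ f w) (hw : f w ≠ 0) : nOrd f w = 0 := by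
  have : analyticOrderAt f w = ((0 : ℕ) : ℕ∞) := by
    rw [hf.analyticOrderAt_eq_natCast]
    exact ⟨f, hf, hw, by filter_upwards with z; simp⟩
  simp [nOrd, vanishingOrder_eq hf, this]

lemma strip {f : ℂ → ℂ} (hf : Differentiable ℂ f) {w₀ : ℂ} (h0 : f w₀ = 0) :
    ∃ g : ℂ → ℂ, Differentiable ℂ g ∧ ∀ z, f z = (z - w₀) * g z := by
  refine ⟨dslope f w₀, ?_, ?_⟩
  · rw [← differentiableOn_univ]
    exact (Complex.differentiableOn_dslope (univ_mem)).mpr hf.differentiableOn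
  · intro z
    have h := sub_smul_dslope f w₀ z
    rw [h0, sub_zero] at h
    rw [← h, smul_eq_mul]

lemma nOrd_mul_sub {g : ℂ → ℂ} (hg : Differentiable ℂ g) (hsome : ∃ z, g z ≠ 0) (w₀ w : ℂ) :
    nOrd (fun z => (z - w₀) * g z) w = nOrd g w + (if w = w₀ then 1 else 0) := by
  set f : ℂ → ℂ := fun z => (z - w₀) * g z with hfdef
  have hf : Differentiable ℂ f := (differentiable_id.sub_const w₀).mul hg
  obtain ⟨h, hh, hh0, hev⟩ := nOrd_spec hg hsome w
  by_cases hww : w = w₀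
  · subst hww
    have hev2 : ∀ᶠ z in 𝓝 w, f z = (z - w) ^ (nOrd g w + 1) • h z := by
      filter_upwards [hev] with z hz
      simp only [hfdef, hz, smul_eq_mul]
      ring
    have horder : analyticOrderAt f w = ((nOrd g w + 1 : ℕ) : ℕ∞) :=
      (hf.analyticAt w).analyticOrderAt_eq_natCast.mpr ⟨h, hh, hh0, hev2⟩
    rw [if_pos rfl]
    show (vanishingOrder f w).toNat = nOrd g w + 1
    rw [vanishingOrder_eq (hf.analyticAt w), horder, ENat.toNat_coe]
  · have hev2 : ∀ᶠ z in 𝓝 w, f z = (z - w) ^ (nOrd g w) • ((z - w₀) * h z) := by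
      filter_upwards [hev] with z hz
      simp only [hfdef, hz, smul_eq_mul]
      ring
    have hwit : AnalyticAt ℂ (fun z => (z - w₀) * h z) w :=
      ((analyticAt_id.sub analyticAt_const)).mul hh
    have hne : (w - w₀) * h w ≠ 0 := mul_ne_zero (sub_ne_zero.mpr hww) hh0
    have horder : analyticOrderAt f w = ((nOrd g w : ℕ) : ℕ∞) :=
      (hf.analyticAt w).analyticOrderAt_eq_natCast.mpr ⟨_, hwit, hne, hev2⟩
    rw [if_neg hww, add_zero]
    show (vanishingOrder f w).toNat = nOrd g w
    rw [vanishingOrder_eq (hf.analyticAt w), horder, ENat.toNat_coe]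

lemma finite_zeros {f : ℂ → ℂ} (hf : Differentiable ℂ f) (hsome : ∃ z, f z ≠ 0) (r : ℝ) :
    {z : ℂ | Complex.abs z < r ∧ f z = 0}.Finite := by
  have hS : (closedBall (0:ℂ) r ∩ f ⁻¹' {0}).Finite := by
    have hc : IsCompact (closedBall (0:ℂ) r ∩ f ⁻¹' {0}) :=
      (isCompact_closedBall _ _).inter_right (isClosed_singleton.preimage hf.continuous)
    apply hc.finite
    rw [isDiscrete_iff_nhdsNE]
    intro x hx
    have hA : AnalyticAt ℂ f x := hf.analyticAt x
    have hnot : ¬ ∃ᶠ z in 𝓝[≠] x, f z = 0 := by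
      intro hfreq
      have hA' : AnalyticOnNhd ℂ f univ := fun y _ => hf.analyticAt y
      obtain ⟨z, hz⟩ := hsome
      exact hz ((hA'.eqOn_zero_of_preconnected_of_frequently_eq_zero isPreconnected_univ
        (mem_univ x) hfreq) (mem_univ z))
    rw [Filter.not_frequently] at hnot
    rw [inf_principal_eq_bot]
    filter_upwards [hnot] with z hz
    intro hzS
    exact hz hzS.2
  apply hS.subset
  rintro z ⟨hz1, hz2⟩
  exact ⟨by simp [mem_closedBall, Complex.dist_eq, Complex.norm_eq_abs, hz1.le], hz2⟩

lemma deriv_differentiable {f : ℂ → ℂ} (hf : Differentiable ℂ f) :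
    Differentiable ℂ (deriv f) := by
  have hA : AnalyticOnNhd ℂ f univ := fun x _ => hf.analyticAt x
  rw [← differentiableOn_univ]
  exact hA.deriv.differentiableOn

lemma deriv_continuous {f : ℂ → ℂ} (hf : Differentiable ℂ f) : Continuous (deriv f) :=
  (deriv_differentiable hf).continuous

lemma integrable_logDeriv {f : ℂ → ℂ} (hf : Differentiable ℂ f) {r : ℝ} (hr : 0 ≤ r)
    (hne : ∀ z ∈ sphere (0:ℂ) r, f z ≠ 0) :
    CircleIntegrable (fun z => deriv f z / f z) 0 r := by
  apply ContinuousOn.circleIntegrable hr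
  exact ContinuousOn.div (deriv_continuous hf).continuousOn hf.continuous.continuousOn
    fun z hz => hne z hz

lemma abs_ofReal_of_pos {r : ℝ} (hr : 0 < r) : Complex.abs ((r:ℝ):ℂ) = r := by
  rw [Complex.abs_ofReal, abs_of_pos hr]

lemma r_mem_sphere {r : ℝ} (hr : 0 < r) : ((r:ℝ):ℂ) ∈ sphere (0:ℂ) r := by
  rw [mem_sphere_zero_iff_norm, Complex.norm_eq_abs, abs_ofReal_of_pos hr]

theorem count_aux {r : ℝ} (hr : 0 < r) :
    ∀ m : ℕ, ∀ f : ℂ → ℂ, Differentiable ℂ f → (∀ z ∈ sphere (0:ℂ) r, f z ≠ 0) →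
    ∀ hfin : {z : ℂ | Complex.abs z < r ∧ f z = 0}.Finite,
      (∑ w ∈ hfin.toFinset, nOrd f w = m) →
      (∮ z in C(0, r), deriv f z / f z) = (2 * Real.pi * Complex.I) * m := by
  intro m
  induction m with
  | zero =>
    intro f hf hne hfin hsum
    have hempty : ∀ z ∈ closedBall (0:ℂ) r, f z ≠ 0 := by
      intro z hz hz0
      rw [mem_closedBall_zero_iff] at hz
      rcases lt_or_eq_of_le hz with h | h
      · have hmem : z ∈ hfin.toFinset := by
          rw [Set.Finite.mem_toFinset]
          exact ⟨by rwa [Complex.norm_eq_abs] at h, hz0⟩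
        have hsome : ∃ w, f w ≠ 0 := ⟨(r:ℂ), hne _ (r_mem_sphere hr)⟩
        have h1 : 1 ≤ nOrd f z := nOrd_pos hf hsome hz0
        have h0 : nOrd f z = 0 := Finset.sum_eq_zero_iff.mp hsum z hmem
        omega
      · exact hne z (by rwa [mem_sphere_zero_iff_norm]) hz0
    have := Complex.circleIntegral_eq_zero_of_differentiable_on_off_countable hr.le
      (countable_empty : (∅ : Set ℂ).Countable)
      (f := fun z => deriv f z / f z)
      (ContinuousOn.div (deriv_continuous hf).continuousOn hf.continuous.continuousOn
        fun z hz => hempty z hz)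
      (fun z hz => ((deriv_differentiable hf) z).div
        (hf z) (hempty z (ball_subset_closedBall hz.1)))
    rw [this]
    simp
  | succ m ih =>
    intro f hf hne hfin hsum
    have hsome : ∃ w, f w ≠ 0 := ⟨(r:ℂ), hne _ (r_mem_sphere hr)⟩
    have hnonempty : hfin.toFinset.Nonempty := by
      by_contra h
      rw [Finset.not_nonempty_iff_eq_empty] at h
      rw [h] at hsum
      simp at hsum
    obtain ⟨w₀, hw₀⟩ := hnonempty
    rw [Set.Finite.mem_toFinset] at hw₀
    obtain ⟨hw₀r, hw₀0⟩ := hw₀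
    obtain ⟨g, hg, hfact⟩ := strip hf hw₀0
    have hffun : f = fun z => (z - w₀) * g z := funext hfact
    have hgne : ∀ z ∈ sphere (0:ℂ) r, g z ≠ 0 := by
      intro z hz h0
      exact hne z hz (by rw [hfact, h0, mul_zero])
    have hgsome : ∃ z, g z ≠ 0 := ⟨(r:ℂ), hgne _ (r_mem_sphere hr)⟩
    have hgfin : {z : ℂ | Complex.abs z < r ∧ g z = 0}.Finite := finite_zeros hg hgsome r
    have hord : ∀ w, nOrd f w = nOrd g w + (if w = w₀ then 1 else 0) := by
      intro w
      rw [hffun]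
      exact nOrd_mul_sub hg hgsome w₀ w
    have hsub : hgfin.toFinset ⊆ hfin.toFinset := by
      intro z hz
      rw [Set.Finite.mem_toFinset] at *
      exact ⟨hz.1, by rw [hfact, hz.2, mul_zero]⟩
    have hsum_g : ∑ w ∈ hgfin.toFinset, nOrd g w = m := by
      have h1 : ∑ w ∈ hfin.toFinset, nOrd f w
          = ∑ w ∈ hfin.toFinset, (nOrd g w + if w = w₀ then 1 else 0) :=
        Finset.sum_congr rfl fun w _ => hord w
      have h2 : ∑ w ∈ hfin.toFinset, (if w = w₀ then (1:ℕ) else 0) = 1 := by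
        rw [Finset.sum_ite_eq' hfin.toFinset w₀ (fun _ => (1:ℕ))]
        rw [if_pos (by rw [Set.Finite.mem_toFinset]; exact ⟨hw₀r, hw₀0⟩)]
      have h3 : ∑ w ∈ hgfin.toFinset, nOrd g w = ∑ w ∈ hfin.toFinset, nOrd g w := by
        apply Finset.sum_subset hsub
        intro x hx hnx
        have hng : ¬(Complex.abs x < r ∧ g x = 0) := by
          rw [Set.Finite.mem_toFinset] at hnx; exact hnx
        have hxr : Complex.abs x < r := ((Set.Finite.mem_toFinset hfin).mp hx).1
        exact nOrd_eq_zero (hg.analyticAt x) fun h => hng ⟨hxr, h⟩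
      rw [h1, Finset.sum_add_distrib, h2, ← h3] at hsum
      omega
    have hInt_g := ih g hg hgne hgfin hsum_g
    have hw₀mem : w₀ ∈ ball (0:ℂ) r := by rwa [mem_ball_zero_iff, Complex.norm_eq_abs]
    have hIg : CircleIntegrable (fun z => deriv g z / g z) 0 r :=
      integrable_logDeriv hg hr.le hgne
    have hIf : CircleIntegrable (fun z => deriv f z / f z) 0 r :=
      integrable_logDeriv hf hr.le hne
    have hEq : EqOn (fun z => deriv f z / f z - deriv g z / g z)
        (fun z => (z - w₀)⁻¹) (sphere (0:ℂ) r) := by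
      intro z hz
      have hz0 : f z ≠ 0 := hne z hz
      have hgz : g z ≠ 0 := hgne z hz
      have hzw : z - w₀ ≠ 0 := by
        intro h
        rw [sub_eq_zero] at h
        rw [mem_sphere_zero_iff_norm, Complex.norm_eq_abs] at hz
        rw [← h] at hw₀r
        exact absurd hz (ne_of_lt hw₀r)
      have hder : deriv f z = 1 * g z + (z - w₀) * deriv g z := by
        have h1 : HasDerivAt (fun y : ℂ => (y - w₀) * g y)
            (1 * g z + (z - w₀) * deriv g z) z :=
          (((hasDerivAt_id z).sub_const w₀).mul (hg z).hasDerivAt)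
        rw [hffun]
        exact h1.deriv
      simp only
      rw [hder, hfact z]
      field_simp
      ring
    have hsplit : (∮ z in C(0,r), deriv f z / f z) - (∮ z in C(0,r), deriv g z / g z)
        = 2 * Real.pi * Complex.I := by
      rw [← circleIntegral.integral_sub hIf hIg, circleIntegral.integral_congr hr.le hEq]
      exact circleIntegral.integral_sub_inv_of_mem_ball hw₀mem
    have hf_eq := eq_add_of_sub_eq hsplit
    rw [hInt_g] at hf_eq
    rw [hf_eq]
    push_cast
    ring

lemma nat_valued_const {ρ : ℝ → ℝ} (hc : Continuous ρ) (hv : ∀ s, ∃ n : ℕ, ρ s = n)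
    {a b : ℝ} (hab : a ≤ b) : ρ a = ρ b := by
  obtain ⟨na, hna⟩ := hv a
  obtain ⟨nb, hnb⟩ := hv b
  have key : ∀ c : ℝ, c ∈ Icc (ρ a) (ρ b) ∪ Icc (ρ b) (ρ a) → ∃ n : ℕ, c = n := by
    intro c hc'
    rcases hc' with h | h
    · obtain ⟨s, _, hs⟩ := intermediate_value_Icc hab hc.continuousOn h
      obtain ⟨n, hn⟩ := hv s
      exact ⟨n, by rw [← hs, hn]⟩
    · obtain ⟨s, _, hs⟩ := intermediate_value_Icc' hab hc.continuousOn h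
      obtain ⟨n, hn⟩ := hv s
      exact ⟨n, by rw [← hs, hn]⟩
  by_contra hne
  rcases lt_or_gt_of_ne hne with h | h
  · have hmem : ρ a + 1/2 ∈ Icc (ρ a) (ρ b) ∪ Icc (ρ b) (ρ a) := by
      left
      constructor
      · linarith
      · rw [hna, hnb] at h ⊢
        have : na < nb := by exact_mod_cast h
        have : (na : ℝ) + 1 ≤ nb := by exact_mod_cast this
        linarith
    obtain ⟨n, hn⟩ := key _ hmem
    rw [hna] at hn
    have : (2 * na + 1 : ℝ) = (2 * n : ℕ) := by push_cast; linarith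
    have : 2 * na + 1 = 2 * n := by exact_mod_cast this
    omega
  · have hmem : ρ b + 1/2 ∈ Icc (ρ a) (ρ b) ∪ Icc (ρ b) (ρ a) := by
      right
      constructor
      · linarith
      · rw [hna, hnb] at h ⊢
        have : nb < na := by exact_mod_cast h
        have : (nb : ℝ) + 1 ≤ na := by exact_mod_cast this
        linarith
    obtain ⟨n, hn⟩ := key _ hmem
    rw [hnb] at hn
    have : (2 * nb + 1 : ℝ) = (2 * n : ℕ) := by push_cast; linarith
    have : 2 * nb + 1 = 2 * n := by exact_mod_cast this
    omega

theorem count {r : ℝ} (hr : 0 < r) (f : ℂ → ℂ) (hf : Differentiable ℂ f)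
    (hne : ∀ z ∈ sphere (0:ℂ) r, f z ≠ 0) :
    ∃ hfin : {z : ℂ | Complex.abs z < r ∧ f z = 0}.Finite,
      (∮ z in C(0, r), deriv f z / f z)
        = (2 * Real.pi * Complex.I) * (∑ w ∈ hfin.toFinset, nOrd f w) := by
  have hsome : ∃ w, f w ≠ 0 := ⟨(r:ℂ), hne _ (r_mem_sphere hr)⟩
  have hfin := finite_zeros hf hsome r
  exact ⟨hfin, count_aux hr _ f hf hne hfin rfl⟩

theorem two_pi_I_ne : (2 * (Real.pi : ℂ) * Complex.I) ≠ 0 := by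
  simp [Real.pi_ne_zero, Complex.I_ne_zero]

set_option maxHeartbeats 1000000 in
theorem rouche {r : ℝ} (hr : 0 < r) {f g : ℂ → ℂ} (hf : Differentiable ℂ f)
    (hg : Differentiable ℂ g)
    (hlt : ∀ z ∈ sphere (0:ℂ) r, Complex.abs (f z - g z) < Complex.abs (g z)) :
    (∮ z in C(0, r), deriv f z / f z) = ∮ z in C(0, r), deriv g z / g z := by
  set h : ℂ → ℂ := fun z => f z - g z with hhdef
  have hh : Differentiable ℂ h := hf.sub hg
  set φ : ℝ → ℝ := fun s => min 1 (max 0 s) with hφdef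
  have hφcont : Continuous φ := continuous_const.min (continuous_const.max continuous_id)
  have hφ0 : ∀ s, 0 ≤ φ s := fun s => le_min zero_le_one (le_max_left 0 s)
  have hφ1 : ∀ s, φ s ≤ 1 := fun s => min_le_left _ _
  set F : ℝ → ℂ → ℂ := fun s z => g z + (φ s : ℂ) * h z with hFdef
  have hFdiff : ∀ s, Differentiable ℂ (F s) :=
    fun s => hg.add ((differentiable_const _).mul hh)
  have hFne : ∀ s, ∀ z ∈ sphere (0:ℂ) r, F s z ≠ 0 := by
    intro s z hz h0
    have h1 : g z = -((φ s : ℂ) * h z) := by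
      have := eq_neg_of_add_eq_zero_left h0
      exact this
    have h2 : Complex.abs (g z) = φ s * Complex.abs (h z) := by
      rw [h1, map_neg_eq_map, map_mul, Complex.abs_ofReal, _root_.abs_of_nonneg (hφ0 s)]
    have h3 : Complex.abs (h z) < Complex.abs (g z) := hlt z hz
    nlinarith [Complex.abs.nonneg (h z), hφ1 s, hφ0 s]
  have hFderiv : ∀ s z, deriv (F s) z = deriv g z + (φ s : ℂ) * deriv h z := by
    intro s z
    exact ((hg z).hasDerivAt.add (((hh z).hasDerivAt.const_mul ((φ s : ℂ))))).deriv
  set N : ℝ → ℂ := fun s =>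
    ∮ z in C(0, r), (deriv g z + (φ s : ℂ) * deriv h z) / (g z + (φ s : ℂ) * h z) with hNdef
  have hNF : ∀ s, N s = ∮ z in C(0, r), deriv (F s) z / F s z := by
    intro s
    simp only [hNdef]
    congr 1
    funext z
    rw [hFderiv s z]
  have hNcont : Continuous N := by
    have hrw : N = fun s => ∫ θ in (0:ℝ)..(2*Real.pi), (circleMap 0 r θ * Complex.I) •
        ((deriv g (circleMap 0 r θ) + (φ s:ℂ) * deriv h (circleMap 0 r θ)) /
          (g (circleMap 0 r θ) + (φ s:ℂ) * h (circleMap 0 r θ))) := by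
      funext s
      simp only [hNdef, circleIntegral, deriv_circleMap]
    rw [hrw]
    apply intervalIntegral.continuous_parametric_intervalIntegral_of_continuous'
    have hcm : Continuous fun p : ℝ × ℝ => circleMap 0 r p.2 :=
      (continuous_circleMap 0 r).comp continuous_snd
    have hφc : Continuous fun p : ℝ × ℝ => ((φ p.1 : ℝ) : ℂ) :=
      Complex.continuous_ofReal.comp (hφcont.comp continuous_fst)
    apply Continuous.smul (hcm.mul continuous_const)
    apply Continuous.div
    · exact (((deriv_continuous hg).comp hcm)).add
        (hφc.mul ((deriv_continuous hh).comp hcm))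
    · exact ((hg.continuous.comp hcm)).add (hφc.mul (hh.continuous.comp hcm))
    · intro p
      exact hFne p.1 _ (circleMap_mem_sphere 0 hr.le p.2)
  have hNval : ∀ s, ∃ n : ℕ, N s = (2 * Real.pi * Complex.I) * n := by
    intro s
    obtain ⟨fin_s, hc⟩ := count hr (F s) (hFdiff s) (hFne s)
    exact ⟨_, (hNF s).trans hc⟩
  set ρ : ℝ → ℝ := fun s => ((N s) / (2 * Real.pi * Complex.I)).re with hρdef
  have hρcont : Continuous ρ := Complex.continuous_re.comp (hNcont.div_const _)
  have hρval : ∀ s, ∃ n : ℕ, ρ s = n := by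
    intro s
    obtain ⟨n, hn⟩ := hNval s
    refine ⟨n, ?_⟩
    rw [hρdef]
    simp only [hn]
    rw [mul_comm, mul_div_assoc, div_self two_pi_I_ne, mul_one]
    simp
  have hρeq : ρ 0 = ρ 1 := nat_valued_const hρcont hρval zero_le_one
  have hφzero : φ 0 = 0 := by simp [hφdef]
  have hφone : φ 1 = 1 := by simp [hφdef]
  have hN0 : N 0 = ∮ z in C(0, r), deriv g z / g z := by
    rw [hNdef]
    simp only [hφzero]
    congr 1
    funext z
    push_cast
    ring_nf
  have hN1 : N 1 = ∮ z in C(0, r), deriv f z / f z := by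
    rw [hNdef]
    simp only [hφone]
    congr 1
    funext z
    have hdh : deriv h z = deriv f z - deriv g z := by
      rw [hhdef]
      exact deriv_sub (hf z) (hg z)
    rw [hdh]
    push_cast
    rw [hhdef]
    simp only
    ring_nf
  have hNeq : N 0 = N 1 := by
    have h0 := hρval 0
    have h1 := hρval 1
    obtain ⟨n0, hn0⟩ := hNval 0
    obtain ⟨n1, hn1⟩ := hNval 1
    have : ρ 0 = n0 := by
      rw [hρdef]; simp only [hn0]
      rw [mul_comm, mul_div_assoc, div_self two_pi_I_ne, mul_one]; simp
    have h1' : ρ 1 = n1 := by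
      rw [hρdef]; simp only [hn1]
      rw [mul_comm, mul_div_assoc, div_self two_pi_I_ne, mul_one]; simp
    have : (n0 : ℝ) = n1 := by rw [← this, ← h1', hρeq]
    have : n0 = n1 := by exact_mod_cast this
    rw [hn0, hn1, this]
  rw [← hN1, ← hNeq, hN0]

theorem monomial_integral {r : ℝ} (hr : 0 < r) {C : ℂ} (hC : C ≠ 0) (k : ℕ) :
    (∮ z in C(0, r), deriv (fun w => C * w ^ k) z / (C * z ^ k))
      = (2 * Real.pi * Complex.I) * k := by
  rcases Nat.eq_zero_or_pos k with hk | hk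
  · subst hk
    have h0 : (fun z : ℂ => deriv (fun w => C * w ^ 0) z / (C * z ^ 0)) = fun _ => 0 := by
      funext z
      simp
    rw [h0]
    simp [circleIntegral]
  · have hderiv : ∀ z : ℂ, deriv (fun w => C * w ^ k) z = C * (k * z ^ (k-1)) := fun z =>
      ((hasDerivAt_pow k z).const_mul C).deriv
    have hEq : EqOn (fun z : ℂ => deriv (fun w => C * w ^ k) z / (C * z ^ k))
        (fun z => (k:ℂ) * (z - 0)⁻¹) (sphere (0:ℂ) r) := by
      intro z hz
      have hz0 : z ≠ 0 := by
        intro h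
        rw [mem_sphere_zero_iff_norm, h] at hz
        simp at hz
        exact hr.ne' hz.symm
      have hzk : z ^ (k-1) * z = z ^ k := by
        rw [← pow_succ]
        congr 1
        omega
      simp only [hderiv z, sub_zero]
      field_simp
      linear_combination (k:ℂ) * hzk
    rw [circleIntegral.integral_congr hr.le hEq]
    have : (fun z : ℂ => (k:ℂ) * (z - 0)⁻¹) = fun z : ℂ => (k:ℂ) * ((z - 0)⁻¹) := rfl
    rw [circleIntegral.integral_const_mul]
    rw [circleIntegral.integral_sub_inv_of_mem_ball (mem_ball_self hr)]
    ring

theorem rouche_count {r : ℝ} (hr : 0 < r) {f : ℂ → ℂ} {C : ℂ} {k : ℕ} (hC : C ≠ 0)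
    (hf : Differentiable ℂ f)
    (hlt : ∀ z ∈ sphere (0:ℂ) r, Complex.abs (f z - C * z ^ k) < Complex.abs (C * z ^ k)) :
    (∀ z ∈ sphere (0:ℂ) r, f z ≠ 0) ∧
    ∃ hfin : {z : ℂ | Complex.abs z < r ∧ f z = 0}.Finite,
      ∑ w ∈ hfin.toFinset, nOrd f w = k := by
  have hg : Differentiable ℂ (fun z : ℂ => C * z ^ k) := (differentiable_pow k).const_mul C
  have hne : ∀ z ∈ sphere (0:ℂ) r, f z ≠ 0 := by
    intro z hz h0
    have h1 := hlt z hz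
    rw [h0, zero_sub, map_neg_eq_map] at h1
    exact lt_irrefl _ h1
  refine ⟨hne, ?_⟩
  obtain ⟨hfin, hcount⟩ := count hr f hf hne
  refine ⟨hfin, ?_⟩
  have hR := rouche hr hf hg hlt
  rw [hcount, monomial_integral hr hC k] at hR
  have := mul_left_cancel₀ two_pi_I_ne hR
  exact_mod_cast this

lemma tri_succ (n : ℕ) : (n+1) * ((n+1) - 1) / 2 = n * (n - 1) / 2 + n := by
  have h : (n+1) * n = n * (n-1) + 2 * n := by
    cases n with
    | zero => simp
    | succ m => simp only [Nat.succ_sub_one]; ring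
  simp only [Nat.add_sub_cancel, h]
  rw [Nat.add_mul_div_left _ _ (by norm_num : 0 < 2)]

lemma tri_cast (n : ℕ) : ((n * (n - 1) / 2 : ℕ) : ℝ) = (n:ℝ) * ((n:ℝ) - 1) / 2 := by
  cases n with
  | zero => simp
  | succ m =>
    have h2 : 2 ∣ (m+1) * ((m+1) - 1) := by
      simp only [Nat.add_sub_cancel]
      rcases Nat.even_or_odd m with h | h
      · exact Dvd.dvd.mul_left h.two_dvd _
      · exact Dvd.dvd.mul_right (h.add_one).two_dvd _
    rw [Nat.cast_div h2 (by norm_num)]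
    push_cast
    ring

lemma deformedExp_differentiable {q : ℂ} (hq0 : q ≠ 0) (hq1 : Complex.abs q < 1) :
    Differentiable ℂ (fun x => deformedExp x q) := by
  set c : ℕ → ℂ := fun n => q ^ (n * (n - 1) / 2) / (n.factorial : ℂ) with hcdef
  have hc0 : ∀ n, c n ≠ 0 := fun n =>
    div_ne_zero (pow_ne_zero _ hq0) (Nat.cast_ne_zero.mpr n.factorial_ne_zero)
  have hqa : (0:ℝ) < Complex.abs q := Complex.abs.pos hq0
  have hnorm : ∀ n : ℕ, ‖c n‖ = Complex.abs q ^ (n * (n - 1) / 2) / (n.factorial : ℝ) := by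
    intro n
    simp [hcdef, norm_div, norm_pow, Complex.norm_eq_abs, Complex.abs_natCast]
  have hratio : ∀ n : ℕ, ‖c (n+1)‖ / ‖c n‖ = Complex.abs q ^ n / (n+1) := by
    intro n
    rw [hnorm, hnorm, tri_succ n, pow_add, Nat.factorial_succ, Nat.cast_mul]
    have hfn : (0:ℝ) < (n.factorial : ℝ) := by positivity
    have hn1 : (0:ℝ) < ((n+1 : ℕ) : ℝ) := by positivity
    push_cast
    field_simp
  have htend : Filter.Tendsto (fun n : ℕ => ‖c (n+1)‖ / ‖c n‖) atTop (nhds 0) := by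
    apply squeeze_zero (fun n => by positivity)
      (g := fun n : ℕ => Complex.abs q ^ n)
    · intro n
      rw [hratio n]
      apply div_le_self (by positivity)
      have : (0:ℝ) ≤ n := Nat.cast_nonneg n
      linarith
    · exact tendsto_pow_atTop_nhds_zero_of_lt_one (Complex.abs.nonneg q) hq1
  have hrad : (FormalMultilinearSeries.ofScalars ℂ c).radius = ⊤ :=
    FormalMultilinearSeries.ofScalars_radius_eq_top_of_tendsto ℂ c
      (Filter.Eventually.of_forall hc0) htend
  have hball := (FormalMultilinearSeries.ofScalars ℂ c).hasFPowerSeriesOnBall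
    (by rw [hrad]; exact ENNReal.zero_lt_top)
  rw [hrad] at hball
  have hdiff := hball.differentiableOn
  rw [Metric.emetric_ball_top] at hdiff
  have hsum_eq : (fun x => deformedExp x q) = (FormalMultilinearSeries.ofScalars ℂ c).sum := by
    funext x
    show deformedExp x q = FormalMultilinearSeries.ofScalarsSum c x
    rw [FormalMultilinearSeries.ofScalars_sum_eq]
    unfold deformedExp
    apply tsum_congr
    intro n
    rw [smul_eq_mul]
    rw [hcdef]
    ring
  rw [← differentiableOn_univ, hsum_eq]
  exact hdiff

lemma deformedExp_dominated {k : ℕ} {u t : ℝ} (hu : 0 < u) (ht0 : 0 < t) (ht1 : t < 1)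
    (hG : (k.factorial : ℝ) *
        ∑' n : ℕ, u ^ ((n : ℤ) - (k : ℤ)) * t ^ ((((n : ℝ) - (k : ℝ)) ^ 2) / 2)
          / (n.factorial : ℝ) ≤ 2)
    {q : ℂ} (hq0 : q ≠ 0) (hqt : Complex.abs q < t) :
    ∀ x : ℂ, Complex.abs x = u * Complex.abs q ^ ((1 : ℝ) / 2 - (k : ℝ)) →
      Complex.abs (deformedExp x q - (q ^ (k * (k-1) / 2) / (k.factorial : ℂ)) * x ^ k)
        < Complex.abs ((q ^ (k * (k-1) / 2) / (k.factorial : ℂ)) * x ^ k) := by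
  set p : ℝ := Complex.abs q with hpdef
  have hp0 : 0 < p := Complex.abs.pos hq0
  have hp1 : p < 1 := hqt.trans ht1
  set w : ℝ → ℕ → ℝ := fun s n =>
    u ^ ((n : ℤ) - (k : ℤ)) * s ^ ((((n : ℝ) - (k : ℝ)) ^ 2) / 2) / (n.factorial : ℝ)
    with hwdef
  have hkfac : (0:ℝ) < (k.factorial : ℝ) := by positivity
  have hwpos : ∀ s : ℝ, 0 < s → ∀ n, 0 < w s n := by
    intro s hs n
    have h1 : (0:ℝ) < u ^ ((n : ℤ) - (k : ℤ)) := zpow_pos hu _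
    have h2 : (0:ℝ) < s ^ ((((n : ℝ) - (k : ℝ)) ^ 2) / 2) := Real.rpow_pos_of_pos hs _
    have h3 : (0:ℝ) < (n.factorial : ℝ) := by positivity
    exact div_pos (mul_pos h1 h2) h3
  have hwsum : ∀ s : ℝ, 0 < s → s ≤ 1 → Summable (w s) := by
    intro s hs hs1
    refine Summable.of_nonneg_of_le (fun n => (hwpos s hs n).le) (fun n => ?_)
      ((Real.summable_pow_div_factorial u).mul_left (u ^ (-(k:ℤ))))
    have h1 : s ^ ((((n : ℝ) - (k : ℝ)) ^ 2) / 2) ≤ 1 :=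
      Real.rpow_le_one hs.le hs1 (by positivity)
    have h2 : u ^ ((n : ℤ) - (k : ℤ)) = u ^ (-(k:ℤ)) * u ^ n := by
      rw [sub_eq_add_neg, add_comm, zpow_add₀ hu.ne', zpow_natCast]
    calc w s n ≤ u ^ ((n : ℤ) - (k : ℤ)) * 1 / (n.factorial : ℝ) := by
          simp only [hwdef]
          gcongr
      _ = u ^ (-(k:ℤ)) * (u ^ n / n.factorial) := by rw [h2]; ring
  have hterm_lt : ∀ n : ℕ, n ≠ k → w p n < w t n := by
    intro n hn
    have hne : ((n : ℝ) - (k : ℝ)) ≠ 0 := by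
      rw [sub_ne_zero]
      exact_mod_cast hn
    have hepos : (0:ℝ) < (((n : ℝ) - (k : ℝ)) ^ 2) / 2 := by positivity
    have hlt : p ^ ((((n : ℝ) - (k : ℝ)) ^ 2) / 2) < t ^ ((((n : ℝ) - (k : ℝ)) ^ 2) / 2) :=
      Real.rpow_lt_rpow hp0.le hqt hepos
    simp only [hwdef]
    gcongr
  have hwk : ∀ s : ℝ, w s k = 1 / (k.factorial : ℝ) := by
    intro s
    simp only [hwdef, sub_self, zpow_zero, Real.rpow_zero]
    norm_num
  have hsum_t := hwsum t ht0 ht1.le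
  have hsum_p := hwsum p hp0 hp1.le
  have hite_t_sum : Summable (fun n => if n = k then 0 else w t n) := by
    refine Summable.of_nonneg_of_le (fun n => ?_) (fun n => ?_) hsum_t
    · by_cases h : n = k <;> simp [h, (hwpos t ht0 n).le, (hwpos t ht0 k).le]
    · by_cases h : n = k <;> simp [h, (hwpos t ht0 n).le, (hwpos t ht0 k).le]
  have hite_p_sum : Summable (fun n => if n = k then 0 else w p n) := by
    refine Summable.of_nonneg_of_le (fun n => ?_) (fun n => ?_) hsum_p
    · by_cases h : n = k <;> simp [h, (hwpos p hp0 n).le, (hwpos p hp0 k).le]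
    · by_cases h : n = k <;> simp [h, (hwpos p hp0 n).le, (hwpos p hp0 k).le]
  have hsum_ite_lt : (∑' n, if n = k then 0 else w p n) < 1 / (k.factorial : ℝ) := by
    have hstrict : (∑' n, if n = k then 0 else w p n)
        < ∑' n, if n = k then 0 else w t n := by
      apply Summable.tsum_lt_tsum_of_nonneg (i := k + 1)
      · intro b
        by_cases h : b = k <;> simp [h, (hwpos p hp0 b).le]
      · intro b
        by_cases h : b = k
        · simp [h]
        · simp only [if_neg h]
          exact (hterm_lt b h).le
      · rw [if_neg (Nat.succ_ne_self k)]
        rw [if_neg (Nat.succ_ne_self k)]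
        exact hterm_lt _ (Nat.succ_ne_self k)
      · exact hite_t_sum
    have hsplit_t : ∑' n, w t n = w t k + ∑' n, if n = k then 0 else w t n :=
      Summable.tsum_eq_add_tsum_ite hsum_t k
    have hS_le : ∑' n, w t n ≤ 2 / (k.factorial : ℝ) := by
      rw [le_div_iff₀ hkfac]
      linarith [hG]
    have : (∑' n, if n = k then 0 else w t n) ≤ 1 / (k.factorial : ℝ) := by
      have := hwk t
      have h2 : (2:ℝ) / (k.factorial : ℝ) - 1 / (k.factorial : ℝ) = 1 / (k.factorial : ℝ) := by
        ring
      linarith [hsplit_t, hS_le]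
    linarith
  -- norm identity
  intro x hx
  set A : ℝ := u ^ k * p ^ (-((k:ℝ)^2) / 2) / (k.factorial : ℝ) with hAdef
  have hA0 : 0 < A := by
    have := Real.rpow_pos_of_pos hp0 (-((k:ℝ)^2) / 2)
    positivity
  have key : ∀ n : ℕ, Complex.abs (x ^ n * q ^ (n * (n - 1) / 2) / (n.factorial : ℂ))
      = A * ((k.factorial : ℝ) * w p n) := by
    intro n
    have hLHS : Complex.abs (x ^ n * q ^ (n * (n - 1) / 2) / (n.factorial : ℂ))
        = (u * p ^ ((1:ℝ)/2 - (k:ℝ))) ^ n * p ^ (((n * (n - 1) / 2 : ℕ) : ℝ))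
          / (n.factorial : ℝ) := by
      rw [map_div₀, map_mul, map_pow, map_pow, hx]
      rw [Complex.abs_natCast]
      rw [Real.rpow_natCast]
    rw [hLHS]
    have h1 : (u * p ^ ((1:ℝ)/2 - (k:ℝ))) ^ n
        = u ^ n * p ^ (((1:ℝ)/2 - (k:ℝ)) * n) := by
      rw [mul_pow]
      congr 1
      rw [← Real.rpow_natCast (p ^ ((1:ℝ)/2 - (k:ℝ))) n, ← Real.rpow_mul hp0.le]
    have h2 : (((n * (n - 1) / 2 : ℕ) : ℝ)) = (n:ℝ) * ((n:ℝ) - 1) / 2 := tri_cast n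
    rw [h1, h2]
    -- RHS
    have h3 : A * ((k.factorial : ℝ) * w p n)
        = u ^ n * p ^ ((((n : ℝ) - (k : ℝ)) ^ 2) / 2 + (-((k:ℝ)^2) / 2))
          / (n.factorial : ℝ) := by
      rw [hAdef, hwdef]
      simp only
      rw [Real.rpow_add hp0]
      have h4 : u ^ (k:ℕ) * u ^ ((n : ℤ) - (k : ℤ)) = u ^ n := by
        rw [← zpow_natCast u k, ← zpow_add₀ hu.ne', ← zpow_natCast u n]
        congr 1
        ring
      field_simp
      ring_nf
      rw [← h4]
    rw [h3, mul_assoc, ← Real.rpow_add hp0]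
    have h5 : ((1:ℝ)/2 - (k:ℝ)) * (n:ℝ) + (n:ℝ) * ((n:ℝ) - 1) / 2
        = (((n : ℝ) - (k : ℝ)) ^ 2) / 2 + (-((k:ℝ)^2) / 2) := by ring
    rw [h5]
  -- summability of complex terms
  have hsummable : Summable (fun n : ℕ => x ^ n * q ^ (n * (n - 1) / 2) / (n.factorial : ℂ)) := by
    apply Summable.of_norm
    apply Summable.congr ((hsum_p.mul_left ((k.factorial : ℝ))).mul_left A)
    intro n
    rw [← key n]
    rfl
  have hsplit : deformedExp x q
      = x ^ k * q ^ (k * (k - 1) / 2) / (k.factorial : ℂ)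
        + ∑' n, (if n = k then 0 else x ^ n * q ^ (n * (n - 1) / 2) / (n.factorial : ℂ)) :=
    Summable.tsum_eq_add_tsum_ite hsummable k
  have hCx : (q ^ (k * (k-1) / 2) / (k.factorial : ℂ)) * x ^ k
      = x ^ k * q ^ (k * (k - 1) / 2) / (k.factorial : ℂ) := by ring
  have hdiff : deformedExp x q - (q ^ (k * (k-1) / 2) / (k.factorial : ℂ)) * x ^ k
      = ∑' n, (if n = k then 0 else x ^ n * q ^ (n * (n - 1) / 2) / (n.factorial : ℂ)) := by
    rw [hsplit, hCx]
    ring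
  have hite_norm_sum : Summable (fun n : ℕ =>
      ‖if n = k then 0 else x ^ n * q ^ (n * (n - 1) / 2) / (n.factorial : ℂ)‖) := by
    apply Summable.congr ((hite_p_sum.mul_left ((k.factorial : ℝ))).mul_left A)
    intro n
    by_cases h : n = k
    · simp [h]
    · simp only [if_neg h]
      rw [← key n]
      rfl
  have habs_le : Complex.abs (deformedExp x q
        - (q ^ (k * (k-1) / 2) / (k.factorial : ℂ)) * x ^ k)
      ≤ A * ((k.factorial : ℝ) * ∑' n, (if n = k then 0 else w p n)) := by
    rw [hdiff]
    calc Complex.abs (∑' n, (if n = k then 0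
            else x ^ n * q ^ (n * (n - 1) / 2) / (n.factorial : ℂ)))
        ≤ ∑' n, ‖if n = k then 0 else x ^ n * q ^ (n * (n - 1) / 2) / (n.factorial : ℂ)‖ := by
          rw [← Complex.norm_eq_abs]
          exact norm_tsum_le_tsum_norm hite_norm_sum
      _ = ∑' n, A * ((k.factorial : ℝ) * (if n = k then 0 else w p n)) := by
          apply tsum_congr
          intro n
          by_cases h : n = k
          · simp [h]
          · simp only [if_neg h]
            rw [← key n]
            rfl
      _ = A * ((k.factorial : ℝ) * ∑' n, (if n = k then 0 else w p n)) := by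
          rw [tsum_mul_left, tsum_mul_left]
  have habs_Cx : Complex.abs ((q ^ (k * (k-1) / 2) / (k.factorial : ℂ)) * x ^ k) = A := by
    rw [hCx, key k, hwk p]
    field_simp
  rw [habs_Cx]
  calc Complex.abs (deformedExp x q - (q ^ (k * (k-1) / 2) / (k.factorial : ℂ)) * x ^ k)
      ≤ A * ((k.factorial : ℝ) * ∑' n, (if n = k then 0 else w p n)) := habs_le
    _ < A * ((k.factorial : ℝ) * (1 / (k.factorial : ℝ))) := by
        apply mul_lt_mul_of_pos_left ?_ hA0
        exact mul_lt_mul_of_pos_left hsum_ite_lt hkfac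
    _ = A := by field_simp

theorem stmt0 (k : ℕ) (u t : ℝ) (hu : 0 < u) (ht : t ∈ Set.Ioo (0 : ℝ) 1)
    (hG : (k.factorial : ℝ) *
        ∑' n : ℕ, u ^ ((n : ℤ) - (k : ℤ)) * t ^ ((((n : ℝ) - (k : ℝ)) ^ 2) / 2)
          / (n.factorial : ℝ) ≤ 2)
    (q : ℂ) (hq0 : q ≠ 0) (hqt : ‖q‖ < t) :
    ∀ r : ℝ, r = u * ‖q‖ ^ ((1 : ℝ) / 2 - (k : ℝ)) →
      (∀ x : ℂ, ‖x‖ = r → deformedExp x q ≠ 0) ∧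
      ∃ hfin : {x : ℂ | ‖x‖ < r ∧ deformedExp x q = 0}.Finite,
        ∑ x ∈ hfin.toFinset, vanishingOrder (fun y => deformedExp y q) x = (k : ℕ∞) := by
  obtain ⟨ht0, ht1⟩ := ht
  intro r hr
  have hp0 : 0 < Complex.abs q := Complex.abs.pos hq0
  have hrpos : 0 < r := by
    rw [hr]
    exact mul_pos hu (Real.rpow_pos_of_pos hp0 _)
  have hdom := deformedExp_dominated hu ht0 ht1 hG hq0 hqt
  have hf : Differentiable ℂ (fun y => deformedExp y q) :=
    deformedExp_differentiable hq0 (hqt.trans ht1)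
  have hC : (q ^ (k * (k-1) / 2) / (k.factorial : ℂ)) ≠ 0 :=
    div_ne_zero (pow_ne_zero _ hq0) (Nat.cast_ne_zero.mpr k.factorial_ne_zero)
  have hlt : ∀ z ∈ sphere (0:ℂ) r,
      Complex.abs ((fun y => deformedExp y q) z
          - (q ^ (k * (k-1) / 2) / (k.factorial : ℂ)) * z ^ k)
        < Complex.abs ((q ^ (k * (k-1) / 2) / (k.factorial : ℂ)) * z ^ k) := by
    intro z hz
    rw [mem_sphere_zero_iff_norm, Complex.norm_eq_abs] at hz
    exact hdom z (by rw [hz, hr]; rfl)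
  obtain ⟨hne, hfin, hsum⟩ := rouche_count hrpos hC hf hlt
  constructor
  · intro x hx
    exact hne x (by rw [mem_sphere_zero_iff_norm, hx])
  · refine ⟨hfin, ?_⟩
    have hsome : ∃ z, (fun y => deformedExp y q) z ≠ 0 :=
      ⟨(r:ℂ), hne _ (r_mem_sphere hrpos)⟩
    calc ∑ x ∈ hfin.toFinset, vanishingOrder (fun y => deformedExp y q) x
        = ∑ x ∈ hfin.toFinset, ((nOrd (fun y => deformedExp y q) x : ℕ∞)) :=
          Finset.sum_congr rfl fun x _ => vanishingOrder_eq_nOrd hf hsome x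
      _ = ((∑ x ∈ hfin.toFinset, nOrd (fun y => deformedExp y q) x : ℕ) : ℕ∞) :=
          (Nat.cast_sum _ _).symm
      _ = (k : ℕ∞) := by rw [hsum]
end

section
/- Let q ∈ ℂ with 0 < |q| < 0.44175. Then f(x;q) ≠ 0 for every x ∈ ℂ with |x| ≤ 1.25·|q|^{1/2}, and there exists a unique x ∈ ℂ with |x| < 1.26·|q|^{−1/2} and f(x;q) = 0; consequently this unique zero x₁(q) satisfies 1.25·|q|^{1/2} < |x₁(q)| < 1.26·|q|^{−1/2}. -/
namespace DefExpAux

/-- The `n`-th term of the series. -/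
noncomputable def term (x q : ℂ) (n : ℕ) : ℂ := x ^ n * q ^ (n * (n - 1) / 2) / (n.factorial : ℂ)

lemma abs_term_le {x q : ℂ} (hq : ‖q‖ ≤ 1) (n : ℕ) :
    ‖term x q n‖ ≤ ‖x‖ ^ n / n.factorial := by
  unfold term
  rw [norm_div, norm_mul, norm_pow, norm_pow, Complex.norm_natCast]
  have h1 : ‖q‖ ^ (n * (n - 1) / 2) ≤ 1 :=
    pow_le_one₀ (norm_nonneg q) hq
  have hfac : (0:ℝ) < n.factorial := by exact_mod_cast n.factorial_pos
  apply (div_le_div_iff_of_pos_right hfac).2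
  exact mul_le_of_le_one_right (pow_nonneg (norm_nonneg x) n) h1

lemma summable_term (x q : ℂ) (hq : ‖q‖ ≤ 1) : Summable (term x q) := by
  have hg : Summable (fun n : ℕ => ‖x‖ ^ n / n.factorial) :=
    Real.summable_pow_div_factorial _
  apply Summable.of_norm_bounded hg
  intro n
  exact abs_term_le hq n

/-- The tail `E(x) = ∑_{n ≥ 2} x^n q^(n(n-1)/2)/n!`. -/
noncomputable def E (x q : ℂ) : ℂ := ∑' n : ℕ, term x q (n + 2)

lemma summable_term_shift (x q : ℂ) (hq : ‖q‖ ≤ 1) :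
    Summable (fun n => term x q (n + 2)) :=
  (summable_nat_add_iff 2).2 (summable_term x q hq)

lemma deformedExp_eq (x q : ℂ) (hq : ‖q‖ ≤ 1) :
    deformedExp x q = 1 + x + E x q := by
  have hs := summable_term x q hq
  have h := Summable.sum_add_tsum_nat_add 2 hs
  have h0 : deformedExp x q = ∑' n, term x q n := rfl
  rw [h0, ← h]
  have : ∑ i ∈ Finset.range 2, term x q i = 1 + x := by
    simp [Finset.sum_range_succ, term, Nat.factorial]
  rw [this, E]

lemma exp_succ (n : ℕ) : (n + 3) * (n + 2) / 2 = (n + 2) * (n + 1) / 2 + (n + 2) := by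
  have h : (n + 3) * (n + 2) = (n + 2) * (n + 1) + (n + 2) * 2 := by ring
  rw [h, Nat.add_mul_div_right _ _ (by norm_num : (0:ℕ) < 2)]

/-- helper: sum bounded by four head terms plus twice the fifth -/
lemma tsum_le_head (a : ℕ → ℝ) (h0 : ∀ n, 0 ≤ a n)
    (hhalf : ∀ n, 4 ≤ n → a (n + 1) ≤ a n / 2) (hs : Summable a) :
    ∑' n, a n ≤ a 0 + a 1 + a 2 + a 3 + 2 * a 4 := by
  have hgeom : ∀ n, a (n + 4) ≤ a 4 * (1 / 2) ^ n := by
    intro n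
    induction n with
    | zero => simp
    | succ k ih =>
      have h1 : a (k + 4 + 1) ≤ a (k + 4) / 2 := hhalf (k + 4) (by omega)
      have h2 : k + 1 + 4 = k + 4 + 1 := by omega
      rw [h2]
      calc a (k + 4 + 1) ≤ a (k + 4) / 2 := h1
        _ ≤ (a 4 * (1 / 2) ^ k) / 2 := by linarith
        _ = a 4 * (1 / 2) ^ (k + 1) := by ring
  have hs4 : Summable (fun n => a (n + 4)) := (summable_nat_add_iff 4).2 hs
  have hgs : Summable (fun n : ℕ => a 4 * (1 / 2) ^ n) :=
    (summable_geometric_of_lt_one (by norm_num) (by norm_num)).mul_left _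
  have htail : ∑' n, a (n + 4) ≤ ∑' n : ℕ, a 4 * (1 / 2) ^ n :=
    Summable.tsum_le_tsum hgeom hs4 hgs
  rw [tsum_mul_left, tsum_geometric_of_lt_one (by norm_num) (by norm_num)] at htail
  have hsplit := Summable.sum_add_tsum_nat_add 4 hs
  rw [← hsplit]
  have hsum : ∑ i ∈ Finset.range 4, a i = a 0 + a 1 + a 2 + a 3 := by
    simp [Finset.sum_range_succ]
  rw [hsum]
  have : (1 - (1:ℝ)/2)⁻¹ = 2 := by norm_num
  rw [this] at htail
  linarith

/-- polynomial upper bound for `|E|` -/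
noncomputable def That (r t : ℝ) : ℝ :=
  t * r ^ 2 / 2 + t ^ 3 * r ^ 3 / 6 + t ^ 6 * r ^ 4 / 24 + t ^ 10 * r ^ 5 / 120
    + t ^ 15 * r ^ 6 / 360

/-- polynomial Lipschitz bound for `E` -/
noncomputable def Lhat (r t : ℝ) : ℝ :=
  t * r + t ^ 3 * r ^ 2 / 2 + t ^ 6 * r ^ 3 / 6 + t ^ 10 * r ^ 4 / 24 + t ^ 15 * r ^ 5 / 60

lemma That_mono {r r' t t' : ℝ} (hr0 : 0 ≤ r) (hr : r ≤ r') (ht0 : 0 ≤ t) (ht : t ≤ t') :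
    That r t ≤ That r' t' := by
  have ht0' : 0 ≤ t' := le_trans ht0 ht
  have hr0' : 0 ≤ r' := le_trans hr0 hr
  unfold That
  gcongr <;> first | assumption | exact pow_nonneg ht0' _ | exact pow_nonneg hr0' _ | positivity

lemma Lhat_mono {r r' t t' : ℝ} (hr0 : 0 ≤ r) (hr : r ≤ r') (ht0 : 0 ≤ t) (ht : t ≤ t') :
    Lhat r t ≤ Lhat r' t' := by
  have ht0' : 0 ≤ t' := le_trans ht0 ht
  have hr0' : 0 ≤ r' := le_trans hr0 hr
  unfold Lhat
  gcongr <;> first | assumption | exact pow_nonneg ht0' _ | exact pow_nonneg hr0' _ | positivity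

lemma ratio_le_one {ρ t : ℝ} (hρ : 0 ≤ ρ) (ht0 : 0 ≤ t) (ht : t ≤ 0.44175)
    (hρt : ρ ^ 2 * t ≤ 1.5876) {n : ℕ} (hn : 4 ≤ n) : ρ * t ^ (n + 2) ≤ 1 := by
  have ht1 : t ≤ 1 := le_trans ht (by norm_num)
  have hsq : (ρ * t ^ (n + 2)) ^ 2 ≤ 1 := by
    have h1 : (ρ * t ^ (n + 2)) ^ 2 = ρ ^ 2 * t * t ^ (2 * n + 3) := by ring
    have h2 : t ^ (2 * n + 3) ≤ t ^ 11 := pow_le_pow_of_le_one ht0 ht1 (by omega)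
    have h3 : t ^ 11 ≤ 0.44175 ^ 11 := pow_le_pow_left₀ ht0 ht 11
    nlinarith [pow_nonneg ht0 (2 * n + 3), sq_nonneg ρ, pow_nonneg ht0 11]
  nlinarith [mul_nonneg hρ (pow_nonneg ht0 (n + 2)), sq_nonneg (ρ * t ^ (n + 2) - 1)]

lemma abs_E_le {x q : ℂ} {ρ : ℝ} (hx : ‖x‖ ≤ ρ) (hρ : 0 ≤ ρ)
    (ht : ‖q‖ ≤ 0.44175) (hρt : ρ ^ 2 * ‖q‖ ≤ 1.5876) :
    ‖E x q‖ ≤ That ρ (‖q‖) := by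
  set t := ‖q‖ with htdef
  have ht0 : 0 ≤ t := norm_nonneg q
  have ht1 : t ≤ 1 := le_trans ht (by norm_num)
  set a : ℕ → ℝ := fun n => ρ ^ (n + 2) * t ^ ((n + 2) * (n + 1) / 2) / (n + 2).factorial
    with hadef
  have ha0 : ∀ n, 0 ≤ a n := by
    intro n
    apply div_nonneg (mul_nonneg (pow_nonneg hρ _) (pow_nonneg ht0 _))
    positivity
  have hbound : ∀ n, ‖(term x q (n + 2))‖ ≤ a n := by
    intro n
    unfold term
    rw [norm_div, norm_mul, norm_pow, norm_pow, Complex.norm_natCast]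
    have he : (n + 2) * ((n + 2) - 1) / 2 = (n + 2) * (n + 1) / 2 := by
      congr 1
    have hfac : (0:ℝ) < ((n + 2).factorial : ℝ) := by exact_mod_cast (n + 2).factorial_pos
    rw [he]
    apply (div_le_div_iff_of_pos_right hfac).2
    gcongr
  have hsa : Summable a := by
    apply Summable.of_nonneg_of_le ha0 ?_
      ((summable_nat_add_iff 2).2 (Real.summable_pow_div_factorial ρ))
    intro n
    rw [hadef]
    simp only
    have h1 : t ^ ((n + 2) * (n + 1) / 2) ≤ 1 := pow_le_one₀ ht0 ht1
    have hfac : (0:ℝ) < ((n + 2).factorial : ℝ) := by exact_mod_cast (n + 2).factorial_pos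
    apply (div_le_div_iff_of_pos_right hfac).2
    exact mul_le_of_le_one_right (pow_nonneg hρ _) h1
  have hsnorm : Summable (fun n => ‖term x q (n + 2)‖) := by
    apply Summable.of_nonneg_of_le (fun n => norm_nonneg _) ?_ hsa
    intro n
    exact hbound n
  have h1 : ‖E x q‖ ≤ ∑' n, a n := by
    rw [E]
    calc ‖∑' n, term x q (n + 2)‖ ≤ ∑' n, ‖term x q (n + 2)‖ := norm_tsum_le_tsum_norm hsnorm
      _ ≤ ∑' n, a n := by
          apply Summable.tsum_le_tsum ?_ hsnorm hsa
          intro n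
          exact hbound n
  have hhalf : ∀ n, 4 ≤ n → a (n + 1) ≤ a n / 2 := by
    intro n hn
    have hrat := ratio_le_one hρ ht0 ht hρt hn
    have hkey : a (n + 1) = a n * (ρ * t ^ (n + 2)) / (n + 3) := by
      rw [hadef]
      simp only
      have he : (n + 1 + 2) * (n + 1 + 1) / 2 = (n + 2) * (n + 1) / 2 + (n + 2) := by
        have := exp_succ n
        convert this using 2 <;> omega
      rw [he, pow_add]
      have hfs : ((n + 1 + 2).factorial : ℝ) = (n + 3) * ((n + 2).factorial : ℝ) := by
        have : (n + 1 + 2) = (n + 2) + 1 := by omega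
        rw [this, Nat.factorial_succ]
        push_cast
        ring
      rw [hfs]
      have hf0 : ((n + 2).factorial : ℝ) ≠ 0 := by
        exact_mod_cast (n + 2).factorial_ne_zero
      field_simp
      ring
    rw [hkey]
    have ha := ha0 n
    have hn3 : (2:ℝ) ≤ (n:ℝ) + 3 := by linarith [(n.cast_nonneg : (0:ℝ) ≤ n)]
    rw [div_le_div_iff₀ (by positivity) (by norm_num : (0:ℝ) < 2)]
    have h2 : a n * (ρ * t ^ (n + 2)) ≤ a n := mul_le_of_le_one_right ha hrat
    nlinarith
  have h2 := tsum_le_head a ha0 hhalf hsa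
  have hval : a 0 + a 1 + a 2 + a 3 + 2 * a 4 = That ρ t := by
    rw [hadef]
    simp only
    unfold That
    norm_num [Nat.factorial]
    ring
  linarith

lemma abs_pow_sub_pow_le {x y : ℂ} {ρ : ℝ} (hx : ‖x‖ ≤ ρ) (hy : ‖y‖ ≤ ρ)
    (m : ℕ) : ‖x ^ m - y ^ m‖ ≤ m * ρ ^ (m - 1) * ‖x - y‖ := by
  have hρ : 0 ≤ ρ := le_trans (norm_nonneg x) hx
  rw [← geom_sum₂_mul, norm_mul]
  gcongr
  calc ‖(∑ i ∈ Finset.range m, x ^ i * y ^ (m - 1 - i))‖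
      ≤ ∑ i ∈ Finset.range m, ‖(x ^ i * y ^ (m - 1 - i))‖ := by
        exact norm_sum_le _ _
    _ ≤ ∑ i ∈ Finset.range m, ρ ^ (m - 1) := by
        apply Finset.sum_le_sum
        intro i hi
        rw [norm_mul, norm_pow, norm_pow]
        have hmem := Finset.mem_range.1 hi
        calc ‖x‖ ^ i * ‖y‖ ^ (m - 1 - i) ≤ ρ ^ i * ρ ^ (m - 1 - i) := by
              gcongr <;> first | exact norm_nonneg x | exact norm_nonneg y | assumption
          _ = ρ ^ (m - 1) := by
              rw [← pow_add]
              congr 1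
              omega
    _ = m * ρ ^ (m - 1) := by
        rw [Finset.sum_const, Finset.card_range, nsmul_eq_mul]

lemma abs_E_sub_le {x y q : ℂ} {ρ : ℝ} (hx : ‖x‖ ≤ ρ) (hy : ‖y‖ ≤ ρ)
    (hρ : 0 ≤ ρ) (ht : ‖q‖ ≤ 0.44175)
    (hρt : ρ ^ 2 * ‖q‖ ≤ 1.5876) :
    ‖E x q - E y q‖ ≤ Lhat ρ (‖q‖) * ‖x - y‖ := by
  set t := ‖q‖ with htdef
  have ht0 : 0 ≤ t := norm_nonneg q
  have ht1 : t ≤ 1 := le_trans ht (by norm_num)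
  set b : ℕ → ℝ := fun n => ρ ^ (n + 1) * t ^ ((n + 2) * (n + 1) / 2) / (n + 1).factorial
    with hbdef
  have hb0 : ∀ n, 0 ≤ b n := by
    intro n
    apply div_nonneg (mul_nonneg (pow_nonneg hρ _) (pow_nonneg ht0 _))
    positivity
  have hsx := summable_term_shift x q (le_trans ht (by norm_num))
  have hsy := summable_term_shift y q (le_trans ht (by norm_num))
  have hdiff : E x q - E y q = ∑' n, (term x q (n + 2) - term y q (n + 2)) := by
    rw [E, E, ← Summable.tsum_sub hsx hsy]
  have hbound : ∀ n, ‖(term x q (n + 2) - term y q (n + 2))‖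
      ≤ b n * ‖x - y‖ := by
    intro n
    unfold term
    have hsub : x ^ (n + 2) * q ^ ((n + 2) * ((n + 2) - 1) / 2) / ((n + 2).factorial : ℂ)
        - y ^ (n + 2) * q ^ ((n + 2) * ((n + 2) - 1) / 2) / ((n + 2).factorial : ℂ)
        = (x ^ (n + 2) - y ^ (n + 2)) * q ^ ((n + 2) * ((n + 2) - 1) / 2)
          / ((n + 2).factorial : ℂ) := by
      ring
    rw [hsub, norm_div, norm_mul, norm_pow, Complex.norm_natCast]
    have hfac : (0:ℝ) < ((n + 2).factorial : ℝ) := by exact_mod_cast (n + 2).factorial_pos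
    have h1 := abs_pow_sub_pow_le hx hy (n + 2)
    have he : (n + 2) * ((n + 2) - 1) / 2 = (n + 2) * (n + 1) / 2 := by congr 1
    rw [he]
    have h2 : t ^ ((n + 2) * (n + 1) / 2) ≤ 1 := pow_le_one₀ ht0 ht1
    have hfs : ((n + 2).factorial : ℝ) = (n + 2) * ((n + 1).factorial : ℝ) := by
      rw [show n + 2 = (n + 1) + 1 from rfl, Nat.factorial_succ]
      push_cast
      ring
    rw [div_le_iff₀ hfac]
    have hmain : ‖(x ^ (n + 2) - y ^ (n + 2))‖ * t ^ ((n + 2) * (n + 1) / 2)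
        ≤ ((n + 2) * ρ ^ (n + 1) * ‖x - y‖) * t ^ ((n + 2) * (n + 1) / 2) := by
      gcongr <;> first | exact pow_nonneg ht0 _ | exact_mod_cast h1
    calc ‖(x ^ (n + 2) - y ^ (n + 2))‖ * t ^ ((n + 2) * (n + 1) / 2)
        ≤ ((n + 2) * ρ ^ (n + 1) * ‖x - y‖) * t ^ ((n + 2) * (n + 1) / 2) := hmain
      _ = b n * ‖x - y‖ * ((n + 2).factorial : ℝ) := by
          rw [hbdef]
          simp only
          rw [hfs]
          field_simp
  have hsb : Summable b := by
    apply Summable.of_nonneg_of_le hb0 ?_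
      ((summable_nat_add_iff 1).2 (Real.summable_pow_div_factorial ρ))
    intro n
    rw [hbdef]
    simp only
    have hfac : (0:ℝ) < ((n + 1).factorial : ℝ) := by exact_mod_cast (n + 1).factorial_pos
    apply (div_le_div_iff_of_pos_right hfac).2
    exact mul_le_of_le_one_right (pow_nonneg hρ _) (pow_le_one₀ ht0 ht1)
  have hsbc : Summable (fun n => b n * ‖x - y‖) := hsb.mul_right _
  have hsnorm : Summable (fun n => ‖term x q (n + 2) - term y q (n + 2)‖) := by
    apply Summable.of_nonneg_of_le (fun n => norm_nonneg _) ?_ hsbc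
    intro n
    exact hbound n
  have h1 : ‖E x q - E y q‖ ≤ ∑' n, b n * ‖x - y‖ := by
    rw [hdiff]
    calc ‖∑' n, (term x q (n + 2) - term y q (n + 2))‖
        ≤ ∑' n, ‖term x q (n + 2) - term y q (n + 2)‖ := norm_tsum_le_tsum_norm hsnorm
      _ ≤ ∑' n, b n * ‖x - y‖ := by
          apply Summable.tsum_le_tsum ?_ hsnorm hsbc
          intro n
          exact hbound n
  rw [tsum_mul_right] at h1
  have hhalf : ∀ n, 4 ≤ n → b (n + 1) ≤ b n / 2 := by
    intro n hn
    have hrat := ratio_le_one hρ ht0 ht hρt hn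
    have hkey : b (n + 1) = b n * (ρ * t ^ (n + 2)) / (n + 2) := by
      rw [hbdef]
      simp only
      have he : (n + 1 + 2) * (n + 1 + 1) / 2 = (n + 2) * (n + 1) / 2 + (n + 2) := by
        have := exp_succ n
        convert this using 2 <;> omega
      rw [he, pow_add]
      have hfs : ((n + 1 + 1).factorial : ℝ) = (n + 2) * ((n + 1).factorial : ℝ) := by
        rw [show n + 1 + 1 = (n + 1) + 1 from rfl, Nat.factorial_succ]
        push_cast
        ring
      rw [hfs]
      have hf0 : ((n + 1).factorial : ℝ) ≠ 0 := by
        exact_mod_cast (n + 1).factorial_ne_zero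
      field_simp
      ring
    rw [hkey]
    have hb := hb0 n
    rw [div_le_div_iff₀ (by positivity) (by norm_num : (0:ℝ) < 2)]
    have h2 : b n * (ρ * t ^ (n + 2)) ≤ b n := mul_le_of_le_one_right hb hrat
    have hn2 : (2:ℝ) ≤ (n:ℝ) + 2 := by linarith [(n.cast_nonneg : (0:ℝ) ≤ n)]
    nlinarith
  have h2 := tsum_le_head b hb0 hhalf hsb
  have hval : b 0 + b 1 + b 2 + b 3 + 2 * b 4 = Lhat ρ t := by
    rw [hbdef]
    simp only
    unfold Lhat
    norm_num [Nat.factorial]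
    ring
  have habs : 0 ≤ ‖x - y‖ := norm_nonneg _
  calc ‖E x q - E y q‖ ≤ (∑' n, b n) * ‖x - y‖ := h1
    _ ≤ Lhat ρ t * ‖x - y‖ := by
        apply mul_le_mul_of_nonneg_right ?_ habs
        linarith

/-- The corner inequality : `T̂(R,t) < R - 1` for `R = 1.26/√t`. -/
lemma corner {s : ℝ} (hs0 : 0 < s) (ht : s * s ≤ 0.44175) :
    That (1.26 / s) (s * s) < 1.26 / s - 1 := by
  have hs1 : s ≤ 0.6647 := by nlinarith
  set u := s * s with hu
  have hu0 : 0 ≤ u := by positivity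
  have hut : u ≤ 0.44175 := ht
  -- reduce to s * C < D
  set C : ℝ := 1.7938 + 1.26 ^ 4 / 24 * u ^ 4 + 1.26 ^ 6 / 360 * u ^ 12 with hC
  set D : ℝ := 1.26 - 1.26 ^ 3 / 6 * u ^ 2 - 1.26 ^ 5 / 120 * u ^ 8 with hD
  have hCpos : 0 < C := by
    rw [hC]
    positivity
  have hDpos : 0 < D := by
    rw [hD]
    have h2 : u ^ 2 ≤ 0.44175 ^ 2 := pow_le_pow_left₀ hu0 hut 2
    have h8 : u ^ 8 ≤ 0.44175 ^ 8 := pow_le_pow_left₀ hu0 hut 8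
    nlinarith
  have hkey : s * C < D := by
    have hsq : (s * C) ^ 2 < D ^ 2 := by
      have h1 : (s * C) ^ 2 = u * C ^ 2 := by
        rw [hu]
        ring
      rw [h1]
      have hCle : C ≤ 1.7938 + 1.26 ^ 4 / 24 * 0.44175 ^ 4 + 1.26 ^ 6 / 360 * 0.44175 ^ 12 := by
        rw [hC]
        gcongr
      have hDge : 1.26 - 1.26 ^ 3 / 6 * 0.44175 ^ 2 - 1.26 ^ 5 / 120 * 0.44175 ^ 8 ≤ D := by
        rw [hD]
        gcongr
      have hmid : (0.44175:ℝ) * (1.7938 + 1.26 ^ 4 / 24 * 0.44175 ^ 4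
          + 1.26 ^ 6 / 360 * 0.44175 ^ 12) ^ 2
          < (1.26 - 1.26 ^ 3 / 6 * 0.44175 ^ 2 - 1.26 ^ 5 / 120 * 0.44175 ^ 8) ^ 2 := by
        norm_num
      have hDlow : (0:ℝ) ≤ 1.26 - 1.26 ^ 3 / 6 * 0.44175 ^ 2 - 1.26 ^ 5 / 120 * 0.44175 ^ 8 := by
        norm_num
      calc u * C ^ 2 ≤ 0.44175 * (1.7938 + 1.26 ^ 4 / 24 * 0.44175 ^ 4
            + 1.26 ^ 6 / 360 * 0.44175 ^ 12) ^ 2 := by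
            gcongr
        _ < (1.26 - 1.26 ^ 3 / 6 * 0.44175 ^ 2 - 1.26 ^ 5 / 120 * 0.44175 ^ 8) ^ 2 := hmid
        _ ≤ D ^ 2 := by gcongr
    nlinarith [mul_nonneg hs0.le hCpos.le]
  -- now translate
  have hgoal : s * That (1.26 / s) u < s * (1.26 / s - 1) := by
    have hlhs : s * That (1.26 / s) u
        = s * (0.7938 + 1.26 ^ 4 / 24 * u ^ 4 + 1.26 ^ 6 / 360 * u ^ 12)
          + (1.26 ^ 3 / 6 * u ^ 2 + 1.26 ^ 5 / 120 * u ^ 8) := by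
      unfold That
      rw [hu]
      field_simp
      ring
    have hrhs : s * (1.26 / s - 1) = 1.26 - s := by
      field_simp
    rw [hlhs, hrhs]
    have hexp : s * C = s * (0.7938 + 1.26 ^ 4 / 24 * u ^ 4 + 1.26 ^ 6 / 360 * u ^ 12) + s := by
      rw [hC]
      ring
    rw [hD] at hkey
    linarith
  exact lt_of_mul_lt_mul_left hgoal hs0.le

end DefExpAux

set_option maxHeartbeats 2000000 in
open DefExpAux in
theorem stmt1 (q : ℂ) (hq0 : q ≠ 0) (hq : ‖q‖ < 0.44175) :
    (∀ x : ℂ, ‖x‖ ≤ 1.25 * ‖q‖ ^ ((1 : ℝ) / 2) → deformedExp x q ≠ 0) ∧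
    (∃! x : ℂ, ‖x‖ < 1.26 * ‖q‖ ^ (-(1 : ℝ) / 2) ∧ deformedExp x q = 0) ∧
    (∀ x : ℂ, ‖x‖ < 1.26 * ‖q‖ ^ (-(1 : ℝ) / 2) ∧ deformedExp x q = 0 →
      1.25 * ‖q‖ ^ ((1 : ℝ) / 2) < ‖x‖ ∧
      ‖x‖ < 1.26 * ‖q‖ ^ (-(1 : ℝ) / 2)) := by
  have ht0 : 0 < ‖q‖ := norm_pos_iff.mpr hq0
  have ht : ‖q‖ ≤ 0.44175 := hq.le
  have ht1 : ‖q‖ ≤ 1 := le_trans ht (by norm_num)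
  set t := ‖q‖ with htdef
  set s : ℝ := t ^ ((1 : ℝ) / 2) with hsdef
  have hs0 : 0 < s := Real.rpow_pos_of_pos ht0 _
  have hss : s * s = t := by
    rw [hsdef, ← Real.rpow_add ht0]
    norm_num
  have hs1 : s ≤ 0.6647 := by nlinarith
  have hmul : s * t ^ (-(1 : ℝ) / 2) = 1 := by
    rw [hsdef, ← Real.rpow_add ht0]
    norm_num
  have hRdef : 1.26 * t ^ (-(1 : ℝ) / 2) = 1.26 / s := by
    rw [eq_div_iff hs0.ne']
    linear_combination 1.26 * hmul
  have hRlb : (1.892 : ℝ) < 1.26 / s := by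
    rw [lt_div_iff₀ hs0]
    nlinarith
  -- Part 1 : no zero in the small disk
  have part1 : ∀ x : ℂ, ‖x‖ ≤ 1.25 * s → deformedExp x q ≠ 0 := by
    intro x hx hzero
    have hρ0 : (0:ℝ) ≤ 1.25 * s := by positivity
    have hρt : (1.25 * s) ^ 2 * t ≤ 1.5876 := by
      have h1 : (1.25 * s) ^ 2 * t = 1.5625 * (s * s) * t := by ring
      rw [h1, hss]
      nlinarith
    have hE := abs_E_le hx hρ0 ht hρt
    have hT : That (1.25 * s) t ≤ That (1.25 * 0.6647) 0.44175 :=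
      That_mono hρ0 (by linarith) ht0.le ht
    have hTnum : That (1.25 * 0.6647) 0.44175 < (0.169 : ℝ) := by
      unfold That
      norm_num
    have hdec := deformedExp_eq x q ht1
    rw [hzero] at hdec
    have hEeq : DefExpAux.E x q = -(1 + x) := by linear_combination -hdec
    have habs1 : ‖DefExpAux.E x q‖ = ‖1 + x‖ := by
      rw [hEeq, norm_neg]
    have htri : (1:ℝ) ≤ ‖1 + x‖ + ‖x‖ := by
      have h := norm_add_le (1 + x) (-x)
      simp only [add_neg_cancel_right, norm_one, norm_neg] at h
      simpa using h
    have hxs : ‖x‖ ≤ 1.25 * 0.6647 := by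
      calc ‖x‖ ≤ 1.25 * s := hx
        _ ≤ 1.25 * 0.6647 := by linarith
    rw [← habs1] at htri
    have : (1:ℝ) ≤ 0.169 + 1.25 * 0.6647 := by linarith
    norm_num at this
  -- a priori bound on zeros in the big disk
  have apriori : ∀ x : ℂ, ‖x‖ < 1.26 / s → deformedExp x q = 0 →
      ‖x‖ ≤ 1.892 := by
    intro x hxR hzero
    have hρ0 : 0 ≤ ‖x‖ := norm_nonneg x
    have hρs : ‖x‖ * s < 1.26 := (lt_div_iff₀ hs0).1 hxR
    have hρt : ‖x‖ ^ 2 * t ≤ 1.5876 := by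
      have hsq : ‖x‖ * s * (‖x‖ * s) < 1.26 * 1.26 :=
        mul_lt_mul'' hρs hρs (mul_nonneg hρ0 hs0.le) (mul_nonneg hρ0 hs0.le)
      have h2 : ‖x‖ ^ 2 * (s * s) ≤ 1.5876 := by nlinarith
      rwa [hss] at h2
    have hE := abs_E_le (le_refl (‖x‖)) hρ0 ht hρt
    have hdec := deformedExp_eq x q ht1
    rw [hzero] at hdec
    have hxeq : x = -1 - DefExpAux.E x q := by linear_combination -hdec
    have hρle : ‖x‖ ≤ 1 + That (‖x‖) t := by
      have h2 : ‖-1 - DefExpAux.E x q‖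
          ≤ ‖(-1 : ℂ)‖ + ‖DefExpAux.E x q‖ := by
        have h := norm_add_le (-1 : ℂ) (-(DefExpAux.E x q))
        simpa [sub_eq_add_neg] using h
      have h3 : ‖(-1 : ℂ)‖ = 1 := by simp
      calc ‖x‖ = ‖-1 - DefExpAux.E x q‖ := by rw [← hxeq]
        _ ≤ ‖(-1 : ℂ)‖ + ‖DefExpAux.E x q‖ := h2
        _ ≤ 1 + That (‖x‖) t := by rw [h3]; linarith [hE]
    by_contra hcon
    push_neg at hcon
    have hmem : ‖x‖ ∈ Set.Icc (1.892:ℝ) (1.26 / s) := ⟨hcon.le, hxR.le⟩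
    obtain ⟨p, p', hp, hp', hpq, hcomb⟩ := (Convex.mem_Icc hRlb.le).1 hmem
    have hRpos : (0:ℝ) ≤ 1.26 / s := by positivity
    have hpow : ∀ k : ℕ, ‖x‖ ^ k ≤ p * 1.892 ^ k + p' * (1.26 / s) ^ k := by
      intro k
      have h := (convexOn_pow k).2 (Set.mem_Ici.2 (by norm_num : (0:ℝ) ≤ 1.892))
        (Set.mem_Ici.2 hRpos) hp hp' hpq
      simp only [smul_eq_mul] at h
      calc ‖x‖ ^ k = (p * 1.892 + p' * (1.26 / s)) ^ k := by rw [hcomb]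
        _ ≤ p * 1.892 ^ k + p' * (1.26 / s) ^ k := h
    have hconv : That (‖x‖) t
        ≤ p * That 1.892 t + p' * That (1.26 / s) t := by
      have h2 := mul_le_mul_of_nonneg_left (hpow 2) (show (0:ℝ) ≤ t/2 by positivity)
      have h3 := mul_le_mul_of_nonneg_left (hpow 3) (show (0:ℝ) ≤ t^3/6 by positivity)
      have h4 := mul_le_mul_of_nonneg_left (hpow 4) (show (0:ℝ) ≤ t^6/24 by positivity)
      have h5 := mul_le_mul_of_nonneg_left (hpow 5) (show (0:ℝ) ≤ t^10/120 by positivity)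
      have h6 := mul_le_mul_of_nonneg_left (hpow 6) (show (0:ℝ) ≤ t^15/360 by positivity)
      calc That (‖x‖) t
          = t/2 * ‖x‖ ^ 2 + t^3/6 * ‖x‖ ^ 3 + t^6/24 * ‖x‖ ^ 4
            + t^10/120 * ‖x‖ ^ 5 + t^15/360 * ‖x‖ ^ 6 := by
            unfold That; ring
        _ ≤ t/2 * (p * 1.892 ^ 2 + p' * (1.26 / s) ^ 2)
            + t^3/6 * (p * 1.892 ^ 3 + p' * (1.26 / s) ^ 3)
            + t^6/24 * (p * 1.892 ^ 4 + p' * (1.26 / s) ^ 4)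
            + t^10/120 * (p * 1.892 ^ 5 + p' * (1.26 / s) ^ 5)
            + t^15/360 * (p * 1.892 ^ 6 + p' * (1.26 / s) ^ 6) := by
            linarith
        _ = p * That 1.892 t + p' * That (1.26 / s) t := by
            unfold That; ring
    have hA : That 1.892 t < 0.892 := by
      have hmono : That 1.892 t ≤ That 1.892 0.44175 :=
        That_mono (by norm_num) le_rfl ht0.le ht
      have hnum : That 1.892 0.44175 < (0.892:ℝ) := by
        unfold That
        norm_num
      linarith
    have hB : That (1.26 / s) t < 1.26 / s - 1 := by
      have h := corner hs0 (by rw [hss]; exact ht)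
      rwa [hss] at h
    have hcase : p * That 1.892 t + p' * That (1.26 / s) t
        < p * 0.892 + p' * (1.26 / s - 1) := by
      rcases eq_or_lt_of_le hp with h0 | h0
      · have hp1 : p' = 1 := by linarith
        rw [← h0, hp1]
        simpa using hB
      · have hA' := mul_lt_mul_of_pos_left hA h0
        have hB' := mul_le_mul_of_nonneg_left hB.le hp'
        linarith
    have hcomb' : p * 0.892 + p' * (1.26 / s - 1) = ‖x‖ - 1 := by
      have h : p * 0.892 + p' * (1.26 / s - 1)
          = (p * 1.892 + p' * (1.26 / s)) - (p + p') := by ring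
      rw [h, hcomb, hpq]
    linarith
  -- bounds for points of the closed ball around -1
  have hball : ∀ z : ℂ, z ∈ Metric.closedBall (-1:ℂ) 0.892 → ‖z‖ ≤ 1.892 := by
    intro z hz
    rw [Metric.mem_closedBall, Complex.dist_eq] at hz
    have h1 : ‖z‖ ≤ ‖z - -1‖ + ‖(-1 : ℂ)‖ := by
      have h := norm_add_le (z - -1) (-1 : ℂ)
      simpa using h
    have h3 : ‖(-1 : ℂ)‖ = 1 := by simp
    rw [h3] at h1
    linarith
  have hρt' : (1.892:ℝ) ^ 2 * t ≤ 1.5876 := by nlinarith [ht, ht0.le]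
  have hThat' : That 1.892 t < 0.892 := by
    have hmono : That 1.892 t ≤ That 1.892 0.44175 :=
      That_mono (by norm_num) le_rfl ht0.le ht
    have hnum : That 1.892 0.44175 < (0.892:ℝ) := by
      unfold That
      norm_num
    linarith
  have hLhat : Lhat 1.892 t ≤ 0.9987 := by
    have hmono : Lhat 1.892 t ≤ Lhat 1.892 0.44175 :=
      Lhat_mono (by norm_num) le_rfl ht0.le ht
    have hnum : Lhat 1.892 0.44175 ≤ (0.9987:ℝ) := by
      unfold Lhat
      norm_num
    linarith
  -- uniqueness of zeros in the big disk
  have huniq : ∀ x y : ℂ, ‖x‖ < 1.26 / s → deformedExp x q = 0 →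
      ‖y‖ < 1.26 / s → deformedExp y q = 0 → x = y := by
    intro x y hx1 hx2 hy1 hy2
    have hax := apriori x hx1 hx2
    have hay := apriori y hy1 hy2
    have hEd := abs_E_sub_le hax hay (by norm_num) ht hρt'
    have hdx := deformedExp_eq x q ht1
    have hdy := deformedExp_eq y q ht1
    rw [hx2] at hdx
    rw [hy2] at hdy
    have hxy : x - y = -(DefExpAux.E x q - DefExpAux.E y q) := by
      linear_combination -hdx + hdy
    have habs : ‖x - y‖ = ‖DefExpAux.E x q - DefExpAux.E y q‖ := by
      rw [hxy, norm_neg]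
    have hchain : ‖x - y‖ ≤ 0.9987 * ‖x - y‖ := by
      calc ‖x - y‖ = ‖DefExpAux.E x q - DefExpAux.E y q‖ := habs
        _ ≤ Lhat 1.892 t * ‖x - y‖ := hEd
        _ ≤ 0.9987 * ‖x - y‖ := by
            apply mul_le_mul_of_nonneg_right hLhat (norm_nonneg _)
    have h0 : ‖x - y‖ = 0 := by
      nlinarith [norm_nonneg (x - y)]
    exact sub_eq_zero.1 (norm_eq_zero.1 h0)
  -- existence via the Banach fixed point theorem
  set φ : ℂ → ℂ := fun z => -1 - DefExpAux.E z q with hφ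
  have hmaps : Set.MapsTo φ (Metric.closedBall (-1:ℂ) 0.892) (Metric.closedBall (-1:ℂ) 0.892) := by
    intro z hz
    rw [Metric.mem_closedBall, Complex.dist_eq]
    have hz' := hball z hz
    have hE := abs_E_le hz' (by norm_num) ht hρt'
    have h1 : φ z - -1 = -(DefExpAux.E z q) := by
      rw [hφ]
      ring
    rw [h1, norm_neg]
    linarith
  have hKcoe : ((0.9987 : NNReal) : ℝ) = 0.9987 := by norm_num
  have hlip : LipschitzOnWith (0.9987 : NNReal) φ
      (Metric.closedBall (-1:ℂ) 0.892) := by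
    apply LipschitzOnWith.of_dist_le_mul
    intro z hz w hw
    rw [Complex.dist_eq, Complex.dist_eq, hKcoe]
    have h1 : φ z - φ w = -(DefExpAux.E z q - DefExpAux.E w q) := by
      rw [hφ]
      ring
    rw [h1, norm_neg]
    have hEd := abs_E_sub_le (hball z hz) (hball w hw) (by norm_num) ht hρt'
    calc ‖DefExpAux.E z q - DefExpAux.E w q‖
        ≤ Lhat 1.892 t * ‖z - w‖ := hEd
      _ ≤ 0.9987 * ‖z - w‖ := by
          apply mul_le_mul_of_nonneg_right hLhat (norm_nonneg _)
  have hcontr : ContractingWith (0.9987 : NNReal)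
      (hmaps.restrict φ _ _) := by
    constructor
    · rw [← NNReal.coe_lt_coe, hKcoe]
      norm_num
    · exact LipschitzOnWith.mapsToRestrict hmaps hlip
  obtain ⟨x₀, hx₀mem, hx₀fix, -, -⟩ :=
    ContractingWith.exists_fixedPoint' Metric.isClosed_closedBall.isComplete hmaps hcontr
      (Metric.mem_closedBall_self (by norm_num : (0:ℝ) ≤ 0.892)) (edist_ne_top _ _)
  have hx₀zero : deformedExp x₀ q = 0 := by
    have hfix : φ x₀ = x₀ := hx₀fix
    rw [hφ] at hfix
    rw [deformedExp_eq x₀ q ht1]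
    simp only at hfix
    linear_combination -hfix
  have hx₀R : ‖x₀‖ < 1.26 / s := lt_of_le_of_lt (hball _ hx₀mem) hRlb
  -- assemble the three statements
  refine ⟨part1, ⟨x₀, ⟨by rw [hRdef]; exact hx₀R, hx₀zero⟩, ?_⟩, ?_⟩
  · intro y hy
    rw [hRdef] at hy
    exact huniq y x₀ hy.1 hy.2 hx₀R hx₀zero
  · intro x hx
    rw [hRdef] at hx
    refine ⟨?_, by rw [hRdef]; exact hx.1⟩
    by_contra hcon
    push_neg at hcon
    exact part1 x hcon hx.2
end

section
/- Under these hypotheses, for every k ≥ 1 the family j ↦ 1/(x_k − q·x_j) is summable and its sum equals 0, i.e. Σ_{j≥1} 1/(x_k − q·x_j) = 0. -/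
open Filter Set


lemma summable_aux (R : ℝ) (hR : 1 ≤ R) :
    Summable (fun n : ℕ => (n : ℝ) * R ^ (n - 1) / n.factorial) := by
  have hs : Summable (fun n : ℕ => (2 * R) ^ n / n.factorial) :=
    Real.summable_pow_div_factorial (2 * R)
  apply hs.of_nonneg_of_le (fun n => by positivity) (fun n => ?_)
  have h1 : (n : ℝ) ≤ 2 ^ n := by exact_mod_cast (Nat.lt_two_pow_self (n := n)).le
  have h2 : R ^ (n - 1) ≤ R ^ n := pow_le_pow_right₀ hR (Nat.sub_le n 1)
  have h3 : (n : ℝ) * R ^ (n - 1) ≤ 2 ^ n * R ^ n :=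
    mul_le_mul h1 h2 (by positivity) (by positivity)
  rw [mul_pow]
  exact div_le_div_of_nonneg_right h3 (by positivity)

lemma exp_arith (m : ℕ) : (m + 1) * m / 2 = m + m * (m - 1) / 2 := by
  have hdvd : 2 ∣ m * (m - 1) := by
    cases m with
    | zero => simp
    | succ j => simpa [Nat.succ_sub_one, mul_comm] using (Nat.even_mul_succ_self j).two_dvd
  have key : (m + 1) * m = m * (m - 1) + 2 * m := by
    cases m with
    | zero => simp
    | succ j => simp [Nat.succ_sub_one]; ring
  omega

lemma deformedExp_hasDerivAt (q : ℂ) (hq : ‖q‖ ≤ 1) (z : ℂ) :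
    HasDerivAt (fun w => deformedExp w q) (deformedExp (q * z) q) z := by
  set g : ℕ → ℂ → ℂ := fun n w => w ^ n * q ^ (n * (n - 1) / 2) / (n.factorial : ℂ) with hg
  set g' : ℕ → ℂ → ℂ :=
    fun n w => (n : ℂ) * w ^ (n - 1) * q ^ (n * (n - 1) / 2) / (n.factorial : ℂ) with hg'
  set R : ℝ := ‖z‖ + 1 with hR
  have hR1 : 1 ≤ R := by rw [hR]; linarith [norm_nonneg z]
  set u : ℕ → ℝ := fun n => (n : ℝ) * R ^ (n - 1) / n.factorial with hu
  have hu_sum : Summable u := summable_aux R hR1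
  have hderiv : ∀ n : ℕ, ∀ y : ℂ, y ∈ Metric.ball (0 : ℂ) R → HasDerivAt (g n) (g' n y) y := by
    intro n y _
    have := (hasDerivAt_pow n y).mul_const (q ^ (n * (n - 1) / 2) / (n.factorial : ℂ))
    have e1 : g n = fun y => y ^ n * (q ^ (n * (n - 1) / 2) / ↑n.factorial) := by
      funext w; simp only [hg]; ring
    have e2 : g' n y = ↑n * y ^ (n - 1) * (q ^ (n * (n - 1) / 2) / ↑n.factorial) := by
      simp only [hg']; ring
    rw [e1, e2]; exact this
  have hbound : ∀ n : ℕ, ∀ y : ℂ, y ∈ Metric.ball (0 : ℂ) R → ‖g' n y‖ ≤ u n := by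
    intro n y hy
    simp only [Metric.mem_ball, dist_zero_right] at hy
    have hn : ‖g' n y‖ = (n : ℝ) * ‖y‖ ^ (n - 1) * ‖q‖ ^ (n * (n - 1) / 2) / n.factorial := by
      simp [hg', norm_div, norm_mul, norm_pow]
    rw [hn, hu]
    have h1 : ‖y‖ ^ (n - 1) ≤ R ^ (n - 1) := pow_le_pow_left₀ (norm_nonneg y) hy.le _
    have h2 : ‖q‖ ^ (n * (n - 1) / 2) ≤ 1 := pow_le_one₀ (norm_nonneg q) hq
    have h3 : (n : ℝ) * ‖y‖ ^ (n - 1) * ‖q‖ ^ (n * (n - 1) / 2) ≤ (n : ℝ) * R ^ (n - 1) * 1 := by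
      apply mul_le_mul (by apply mul_le_mul le_rfl h1 (by positivity) (by positivity)) h2
        (by positivity) (by positivity)
    rw [mul_one] at h3
    exact div_le_div_of_nonneg_right h3 (by positivity)
  have hg0 : Summable (fun n => g n 0) := by
    apply summable_of_ne_finset_zero (s := {0})
    intro n hn
    have hn' : n ≠ 0 := by simpa using hn
    simp [hg, zero_pow hn']
  have hz : z ∈ Metric.ball (0 : ℂ) R := by
    simp only [Metric.mem_ball, dist_zero_right, hR]; linarith
  have h0 : (0 : ℂ) ∈ Metric.ball (0 : ℂ) R := by
    simp only [Metric.mem_ball, dist_self, dist_zero_right, norm_zero]; linarith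
  have key := hasDerivAt_tsum_of_isPreconnected hu_sum Metric.isOpen_ball
    ((convex_ball (0:ℂ) R).isPreconnected) hderiv hbound h0 hg0 hz
  have hsum_eq : (∑' n, g' n z) = deformedExp (q * z) q := by
    have hsum' : Summable (fun n => g' n z) :=
      Summable.of_norm_bounded hu_sum (fun n => hbound n z hz)
    rw [Summable.tsum_eq_zero_add hsum']
    have h00 : g' 0 z = 0 := by simp [hg']
    rw [h00, zero_add, deformedExp]
    apply tsum_congr
    intro m
    have hfac : ((m + 1).factorial : ℂ) = (m + 1) * m.factorial := by
      push_cast [Nat.factorial_succ]; ring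
    have hm1 : ((m : ℂ) + 1) ≠ 0 := by
      have : ((m + 1 : ℕ) : ℂ) ≠ 0 := Nat.cast_ne_zero.mpr (Nat.succ_ne_zero m)
      push_cast at this; exact this
    have hmf : ((m.factorial : ℂ)) ≠ 0 := by
      exact_mod_cast Nat.cast_ne_zero.mpr m.factorial_ne_zero
    have hpow : q ^ ((m + 1) * m / 2) = q ^ m * q ^ (m * (m - 1) / 2) := by
      rw [exp_arith m, pow_add]
    simp only [hg', Nat.add_sub_cancel, hfac, hpow]
    push_cast
    rw [mul_pow]
    field_simp
  rw [← hsum_eq]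
  exact key



lemma hasProd_re_of_ofReal {g : ℕ → ℝ} {L : ℂ}
    (h : HasProd (fun j => (g j : ℂ)) L) : HasProd g L.re ∧ L.im = 0 := by
  have heq : ∀ s : Finset ℕ, (∏ j ∈ s, (g j : ℂ)) = ((∏ j ∈ s, g j : ℝ) : ℂ) := by
    intro s; push_cast; rfl
  have h' : Tendsto (fun s : Finset ℕ => ((∏ j ∈ s, g j : ℝ) : ℂ)) atTop (nhds L) := by
    have := h; unfold HasProd at this
    simp only [heq] at this; exact this
  constructor
  · have h2 := (Complex.continuous_re.tendsto L).comp h'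
    unfold HasProd
    exact h2
  · have h2 := (Complex.continuous_im.tendsto L).comp h'
    have h3 : Tendsto (fun _ : Finset ℕ => (0 : ℝ)) atTop (nhds L.im) := by
      exact h2
    exact (tendsto_nhds_unique tendsto_const_nhds h3).symm

lemma hasSum_log_of_hasProd {g : ℕ → ℝ} {P : ℝ} (h : HasProd g P)
    (hg : ∀ j, g j ≠ 0) (hP : P ≠ 0) :
    HasSum (fun j => Real.log (g j)) (Real.log P) := by
  have heq : ∀ s : Finset ℕ, (∑ j ∈ s, Real.log (g j)) = Real.log (∏ j ∈ s, g j) := by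
    intro s
    exact (Real.log_prod (s := s) (f := g) (fun j _ => hg j)).symm
  unfold HasSum
  simp only [heq]
  exact (Real.continuousAt_log hP).tendsto.comp h

lemma hasProd_ne_zero {g : ℕ → ℝ} {P : ℝ} (h : HasProd g P)
    (hg : ∀ j, g j ≠ 0) (hs : Summable fun j => Real.log (g j)) : P ≠ 0 := by
  have h1 : Tendsto (fun s : Finset ℕ => |∏ j ∈ s, g j|) atTop (nhds |P|) :=
    (continuous_abs.tendsto P).comp h
  have h2 : Tendsto (fun s : Finset ℕ => Real.exp (∑ j ∈ s, Real.log (g j))) atTop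
      (nhds (Real.exp (∑' j, Real.log (g j)))) :=
    (Real.continuous_exp.tendsto _).comp hs.hasSum
  have heq : (fun s : Finset ℕ => Real.exp (∑ j ∈ s, Real.log (g j)))
      = fun s : Finset ℕ => |∏ j ∈ s, g j| := by
    funext s
    rw [Real.exp_sum, Finset.abs_prod]
    exact Finset.prod_congr rfl (fun j _ => Real.exp_log_eq_abs (hg j))
  rw [heq] at h2
  have := tendsto_nhds_unique h1 h2
  intro hP0
  rw [hP0, abs_zero] at this
  exact (Real.exp_pos _).ne' this.symm



lemma one_add_sum_le_prod {t : ℕ → ℝ} (ht : ∀ j, 0 ≤ t j) (s : Finset ℕ) :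
    1 + ∑ j ∈ s, t j ≤ ∏ j ∈ s, (1 + t j) := by
  classical
  induction s using Finset.induction_on with
  | empty => simp
  | insert a s hj ih =>
    rw [Finset.sum_insert hj, Finset.prod_insert hj]
    have h1 : 0 ≤ ∑ j ∈ s, t j := Finset.sum_nonneg fun j _ => ht j
    nlinarith [ht a, ih]

lemma summable_inv_abs {x : ℕ → ℝ} (hneg : ∀ j, x j < 0) {L : ℂ}
    (h : HasProd (fun j : ℕ => 1 - 1 / (x j : ℂ)) L) :
    Summable (fun j => 1 / |x j|) := by
  have hcast : (fun j : ℕ => 1 - 1 / (x j : ℂ)) = fun j => ((1 - 1 / x j : ℝ) : ℂ) := by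
    funext j; push_cast; ring
  rw [hcast] at h
  obtain ⟨hre, _⟩ := hasProd_re_of_ofReal h
  set g : ℕ → ℝ := fun j => 1 - 1 / x j with hg
  have hg1 : ∀ j, 1 + 1 / |x j| = g j := by
    intro j
    rw [abs_of_neg (hneg j), div_neg]
    ring
  have hone_le : ∀ u : Finset ℕ, (1 : ℝ) ≤ ∏ j ∈ u, g j := by
    intro u
    have hsum : 0 ≤ ∑ j ∈ u, 1 / |x j| :=
      Finset.sum_nonneg fun j _ => by positivity
    calc (1 : ℝ) ≤ 1 + ∑ j ∈ u, 1 / |x j| := by linarith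
      _ ≤ ∏ j ∈ u, (1 + 1 / |x j|) := one_add_sum_le_prod (fun j => by positivity) _
      _ = ∏ j ∈ u, g j := Finset.prod_congr rfl fun j _ => hg1 j
  have hmono : ∀ s : Finset ℕ, (∏ j ∈ s, g j) ≤ L.re := by
    intro s
    apply ge_of_tendsto hre
    filter_upwards [eventually_ge_atTop s] with t hts
    rw [← Finset.prod_sdiff hts]
    apply le_mul_of_one_le_left ?_ (hone_le _)
    exact Finset.prod_nonneg fun j _ => by rw [← hg1 j]; positivity
  apply summable_of_sum_range_le (c := L.re) (fun j => by positivity)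
  intro n
  calc ∑ j ∈ Finset.range n, 1 / |x j|
      ≤ 1 + ∑ j ∈ Finset.range n, 1 / |x j| := by linarith
    _ ≤ ∏ j ∈ Finset.range n, (1 + 1 / |x j|) :=
        one_add_sum_le_prod (fun j => by positivity) _
    _ = ∏ j ∈ Finset.range n, g j := Finset.prod_congr rfl fun j _ => hg1 j
    _ ≤ L.re := hmono _


lemma abs_log_one_add_le {y : ℝ} (hy : |y| ≤ 1/2) : |Real.log (1 + y)| ≤ 2 * |y| := by
  have h1 : -(1/2 : ℝ) ≤ y := neg_le_of_abs_le hy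
  have h2 : y ≤ 1/2 := le_of_abs_le hy
  have hpos : (0:ℝ) < 1 + y := by linarith
  rw [abs_le]
  constructor
  · have hh := Real.log_le_sub_one_of_pos (x := (1+y)⁻¹) (by positivity)
    rw [Real.log_inv] at hh
    have hinv : (1+y)⁻¹ - 1 = -y/(1+y) := by field_simp; ring
    rw [hinv] at hh
    have habs : -y/(1+y) ≤ 2*|y| := by
      rw [div_le_iff₀ hpos]
      have hny : -y ≤ |y| := neg_le_abs y
      nlinarith [abs_nonneg y]
    linarith
  · have hh := Real.log_le_sub_one_of_pos hpos
    have hy' : y ≤ |y| := le_abs_self y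
    nlinarith [abs_nonneg y]

section Core

variable {x : ℕ → ℝ} (hneg : ∀ j, x j < 0) (hsum : Summable fun j => 1 / |x j|)

include hneg hsum in
lemma summable_abs_log (t : ℝ) :
    Summable (fun j => |Real.log (1 - t / x j)|) := by
  have hs2 : Summable (fun j => 2 * (|t| * (1/|x j|))) := (hsum.mul_left _).mul_left _
  apply Summable.of_norm_bounded_eventually hs2
  rw [Nat.cofinite_eq_atTop]
  have htend : Tendsto (fun j => 1/|x j|) atTop (nhds 0) := by
    rw [← Nat.cofinite_eq_atTop]
    exact hsum.tendsto_cofinite_zero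
  have hev : ∀ᶠ j in atTop, |t| * (1/|x j|) ≤ 1/2 := by
    have h0 : Tendsto (fun j => |t| * (1/|x j|)) atTop (nhds (|t| * 0)) := htend.const_mul _
    rw [mul_zero] at h0
    exact h0.eventually_le_const (by norm_num)
  filter_upwards [hev] with j hj
  have hxj : x j ≠ 0 := (hneg j).ne
  have hyeq : 1 - t / x j = 1 + (-(t / x j)) := by ring
  have habs : |(-(t / x j))| = |t| * (1/|x j|) := by
    rw [abs_neg, abs_div]; ring
  rw [Real.norm_eq_abs, abs_abs, hyeq]
  have hb := abs_log_one_add_le (y := -(t/x j)) (by rw [habs]; exact hj)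
  rw [habs] at hb
  exact hb

include hneg hsum in
lemma core_hasDeriv (p : ℕ → Prop) [DecidablePred p] (t₀ δ : ℝ) (hδ : 0 < δ)
    (hsep : ∀ j, ¬ p j → ∀ t ∈ Ioo (t₀ - δ) (t₀ + δ), δ ≤ |t - x j|) :
    ∀ t ∈ Ioo (t₀ - δ) (t₀ + δ),
      HasSum (fun j => if p j then 0 else 1 / (t - x j))
        (∑' j, if p j then (0:ℝ) else 1 / (t - x j)) ∧
      HasDerivAt (fun s => ∑' j, if p j then (0:ℝ) else Real.log (1 - s / x j))
        (∑' j, if p j then (0:ℝ) else 1 / (t - x j)) t := by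
  set C : ℝ := 2 * (|t₀| + δ) with hC
  have hC0 : 0 < C := by rw [hC]; positivity
  set u : ℕ → ℝ := fun j => if p j then 0 else (if |x j| < C then 1/δ else 2/|x j|) with hu
  have hu_sum : Summable u := by
    have hs2 : Summable (fun j => 2 * (1/|x j|)) := hsum.mul_left 2
    apply Summable.of_norm_bounded_eventually hs2
    rw [Nat.cofinite_eq_atTop]
    have htend : Tendsto (fun j => 1/|x j|) atTop (nhds 0) := by
      rw [← Nat.cofinite_eq_atTop]; exact hsum.tendsto_cofinite_zero
    have hev : ∀ᶠ j in atTop, 1/|x j| ≤ 1/C := htend.eventually_le_const (by positivity)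
    filter_upwards [hev] with j hj
    have hxj : (0:ℝ) < |x j| := abs_pos.mpr (hneg j).ne
    have hCj : ¬ (|x j| < C) := by
      push_neg
      rw [div_le_div_iff₀ hxj hC0] at hj
      linarith
    rw [hu]
    by_cases hp : p j
    · simp only [hp, if_true, Real.norm_eq_abs, abs_zero]
      positivity
    · simp only [hp, if_false, hCj, Real.norm_eq_abs,
        abs_of_nonneg (by positivity : (0:ℝ) ≤ 2/|x j|)]
      rw [div_eq_mul_one_div]
  have hbound : ∀ j : ℕ, ∀ t ∈ Ioo (t₀ - δ) (t₀ + δ),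
      ‖if p j then (0:ℝ) else 1/(t - x j)‖ ≤ u j := by
    intro j t ht
    by_cases hp : p j
    · simp [hp, hu]
    · have hsep' := hsep j hp t ht
      have htx : (0:ℝ) < |t - x j| := lt_of_lt_of_le hδ hsep'
      simp only [hp, if_false, hu, Real.norm_eq_abs, abs_div, abs_one]
      by_cases hcase : |x j| < C
      · simp only [hcase, if_true]
        rw [div_le_div_iff₀ htx hδ]
        linarith
      · simp only [hcase, if_false]
        push_neg at hcase
        have hxj : (0:ℝ) < |x j| := abs_pos.mpr (hneg j).ne
        have ht' : |t| ≤ |t₀| + δ := by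
          obtain ⟨h1, h2⟩ := ht
          rw [abs_le]
          constructor
          · linarith [neg_abs_le t₀]
          · linarith [le_abs_self t₀]
        have habs : |x j| - |t| ≤ |t - x j| := by
          have h2 := abs_sub_abs_le_abs_sub (x j) t
          rw [abs_sub_comm] at h2
          exact h2
        have hhalf : |x j|/2 ≤ |t - x j| := by
          rw [hC] at hcase
          linarith
        calc 1/|t - x j| ≤ 1/(|x j|/2) := one_div_le_one_div_of_le (by positivity) hhalf
          _ = 2/|x j| := by rw [one_div_div]
  have hg : ∀ j : ℕ, ∀ s ∈ Ioo (t₀ - δ) (t₀ + δ),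
      HasDerivAt (fun s => if p j then (0:ℝ) else Real.log (1 - s / x j))
        (if p j then (0:ℝ) else 1/(s - x j)) s := by
    intro j s hs
    by_cases hp : p j
    · simpa [hp] using hasDerivAt_const s (0:ℝ)
    · have hxj : x j ≠ 0 := (hneg j).ne
      have hsep' := hsep j hp s hs
      have hsx : s - x j ≠ 0 := by
        intro h
        rw [h, abs_zero] at hsep'
        linarith
      have hfac : 1 - s / x j ≠ 0 := by
        intro h
        apply hsx
        field_simp at h
        linarith
      have hinner : HasDerivAt (fun s : ℝ => 1 - s / x j) (-(1/x j)) s := by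
        simpa using ((hasDerivAt_id s).div_const (x j)).const_sub 1
      have hlog := hinner.log hfac
      have hxs : x j - s ≠ 0 := by intro h; apply hsx; linarith
      have key : -(1/x j)/(1 - s/x j) = 1/(s - x j) := by
        field_simp
        ring
      simp only [hp, if_false]
      rw [← key]
      exact hlog
  have ht₀ : t₀ ∈ Ioo (t₀ - δ) (t₀ + δ) := by constructor <;> linarith
  have hg0 : Summable (fun j => if p j then (0:ℝ) else Real.log (1 - t₀ / x j)) := by
    apply Summable.of_norm_bounded (summable_abs_log hneg hsum t₀)
    intro j
    by_cases hp : p j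
    · simp [hp]
    · simp [hp]
  intro t ht
  constructor
  · exact (Summable.of_norm_bounded hu_sum (fun j => hbound j t ht)).hasSum
  · exact hasDerivAt_tsum_of_isPreconnected hu_sum isOpen_Ioo isPreconnected_Ioo
      hg hbound ht₀ hg0 ht

end Core


lemma exists_delta {x : ℕ → ℝ} (habs : Tendsto (fun j => |x j|) atTop atTop)
    (hneg : ∀ j, x j < 0) (w : ℝ) (p : ℕ → Prop) [DecidablePred p]
    (hw : ∀ j, ¬ p j → w ≠ x j) :
    ∃ δ : ℝ, 0 < δ ∧ δ ≤ 1/2 ∧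
      ∀ j, ¬ p j → ∀ t ∈ Ioo (w - δ) (w + δ), δ ≤ |t - x j| := by
  obtain ⟨N, hN⟩ := (habs.eventually_ge_atTop (|w| + 1)).exists_forall_of_atTop
  have hNx : ∀ j ≥ N, x j ≤ w - 1 := by
    intro j hj
    have h1 := hN j hj
    have h2 : x j = -|x j| := by rw [abs_of_neg (hneg j)]; ring
    have h3 : -w ≤ |w| := neg_le_abs w
    rw [h2]
    linarith
  classical
  set s : Finset ℝ := insert 1 ((Finset.range N).filter (fun j => ¬ p j)
      |>.image (fun j => |w - x j|)) with hs
  have hsne : s.Nonempty := ⟨1, Finset.mem_insert_self 1 _⟩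
  set δ₀ : ℝ := s.min' hsne with hδ₀
  have hδ₀pos : 0 < δ₀ := by
    rw [hδ₀]
    apply (Finset.lt_min'_iff s hsne).mpr
    intro y hy
    rw [hs] at hy
    rcases Finset.mem_insert.mp hy with rfl | hy
    · norm_num
    · obtain ⟨j, hj, rfl⟩ := Finset.mem_image.mp hy
      have hpj : ¬ p j := (Finset.mem_filter.mp hj).2
      have := hw j hpj
      rw [abs_pos]
      intro h
      exact this (by linarith)
  have hδ₀le : δ₀ ≤ 1 := Finset.min'_le s 1 (Finset.mem_insert_self 1 _)
  refine ⟨δ₀/2, by linarith, by linarith, ?_⟩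
  intro j hpj t ht
  obtain ⟨ht1, ht2⟩ := ht
  by_cases hjN : j < N
  · have hmem : |w - x j| ∈ s := by
      rw [hs]
      apply Finset.mem_insert_of_mem
      apply Finset.mem_image.mpr
      exact ⟨j, Finset.mem_filter.mpr ⟨Finset.mem_range.mpr hjN, hpj⟩, rfl⟩
    have h1 : δ₀ ≤ |w - x j| := Finset.min'_le s _ hmem
    have h2 : |w - t| ≤ δ₀/2 := by
      rw [abs_le]; constructor <;> linarith
    have h3 := abs_sub_abs_le_abs_sub (w - x j) (w - t)
    have h4 : (w - x j) - (w - t) = t - x j := by ring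
    rw [h4] at h3
    have h5 : |w - x j| - |w - t| ≤ |t - x j| := by linarith [h3]
    linarith
  · push_neg at hjN
    have h1 : x j ≤ w - 1 := hNx j hjN
    have h2 : t - x j ≥ 1/2 := by linarith
    rw [abs_of_pos (by linarith : (0:ℝ) < t - x j)]
    linarith


section A
variable {x : ℕ → ℝ} (hneg : ∀ j, x j < 0) (hsum : Summable fun j => 1 / |x j|)
  (habs : Tendsto (fun j => |x j|) atTop atTop)


include hneg hsum habs in
lemma resultA {F : ℝ → ℝ} (hF : ∀ t, HasProd (fun j => 1 - t / x j) (F t))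
    {w : ℝ} {D : ℝ} (hD : HasDerivAt F D w) (hw : ∀ j, w ≠ x j) :
    HasSum (fun j => 1 / (w - x j)) (D / F w) := by
  obtain ⟨δ, hδ, hδhalf, hsep⟩ := exists_delta habs hneg w (fun _ => False)
    (fun j _ => hw j)
  have hsumlog : ∀ t : ℝ, Summable (fun j => Real.log (1 - t / x j)) := by
    intro t
    apply Summable.of_norm
    simpa [Real.norm_eq_abs] using summable_abs_log hneg hsum t
  have hfacne : ∀ s ∈ Ioo (w - δ) (w + δ), ∀ j, 1 - s / x j ≠ 0 := by
    intro s hs j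
    have h1 := hsep j (by simp) s hs
    have hxj : x j ≠ 0 := (hneg j).ne
    intro h
    have hsx : s = x j := by
      field_simp at h
      linarith
    rw [hsx] at h1
    simp at h1
    linarith
  have hFne : ∀ s ∈ Ioo (w - δ) (w + δ), F s ≠ 0 := fun s hs =>
    hasProd_ne_zero (hF s) (hfacne s hs) (hsumlog s)
  have hwmem : w ∈ Ioo (w - δ) (w + δ) := by constructor <;> linarith
  obtain ⟨hHasSum, hHasDeriv⟩ := core_hasDeriv hneg hsum (fun _ => False) w δ hδ hsep w hwmem
  simp only [if_false] at hHasSum hHasDeriv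
  have hGeq : (fun s => ∑' j, Real.log (1 - s / x j)) =ᶠ[nhds w]
      (fun s => Real.log (F s)) := by
    filter_upwards [Ioo_mem_nhds hwmem.1 hwmem.2] with s hs
    exact (hasSum_log_of_hasProd (hF s) (hfacne s hs) (hFne s hs)).tsum_eq
  have hlogF : HasDerivAt (fun s => Real.log (F s)) (D / F w) w :=
    hD.log (hFne w hwmem)
  have hG : HasDerivAt (fun s => Real.log (F s)) (∑' j, 1 / (w - x j)) w :=
    hHasDeriv.congr_of_eventuallyEq hGeq.symm
  have : (∑' j, 1 / (w - x j)) = D / F w := hG.unique hlogF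
  rw [← this]
  exact hHasSum

end A


section B
variable {x : ℕ → ℝ} (hneg : ∀ j, x j < 0) (hsum : Summable fun j => 1 / |x j|)
  (habs : Tendsto (fun j => |x j|) atTop atTop)


include hneg hsum habs in
lemma resultB {F : ℝ → ℝ} (hF : ∀ t, HasProd (fun j => 1 - t / x j) (F t))
    {φ : ℝ → ℂ} (hφF : ∀ t, φ t = ((F t : ℝ) : ℂ))
    {m : ℕ} (hxm : ∀ j, j ≠ m → x m ≠ x j)
    (hφd : HasDerivAt φ 0 (x m)) (hφ0 : φ (x m) = 0) : False := by
  classical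
  obtain ⟨δ, hδ, hδhalf, hsep⟩ := exists_delta habs hneg (x m) (fun j => j = m)
    (fun j hj => hxm j hj)
  have hwmem : x m ∈ Ioo (x m - δ) (x m + δ) := by constructor <;> linarith
  obtain ⟨-, hHasDeriv⟩ :=
    core_hasDeriv hneg hsum (fun j => j = m) (x m) δ hδ hsep (x m) hwmem
  set G : ℝ → ℝ := fun s => ∑' j, if j = m then (0:ℝ) else Real.log (1 - s / x j) with hG
  have hGc : ContinuousAt G (x m) := hHasDeriv.continuousAt
  have hxm0 : x m ≠ 0 := (hneg m).ne
  have hxmabs : (0:ℝ) < |x m| := abs_pos.mpr hxm0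
  -- limit of the norm of the slope is 0
  have hslope := hasDerivAt_iff_tendsto_slope.mp hφd
  have hnorm0 : Tendsto (fun t => ‖φ t‖ / |t - x m|) (nhdsWithin (x m) {x m}ᶜ) (nhds 0) := by
    have h1 : Tendsto (fun t => ‖slope φ (x m) t‖) (nhdsWithin (x m) {x m}ᶜ) (nhds ‖(0:ℂ)‖) :=
      (continuous_norm.tendsto _).comp hslope
    rw [norm_zero] at h1
    apply h1.congr
    intro t
    rw [slope_def_module, hφ0, sub_zero, norm_smul, Real.norm_eq_abs, abs_inv]
    ring
  have hsumlog : ∀ t : ℝ, Summable (fun j => Real.log (1 - t / x j)) := by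
    intro t
    apply Summable.of_norm
    simpa [Real.norm_eq_abs] using summable_abs_log hneg hsum t
  have hexp : Tendsto (fun t => Real.exp (G t) / |x m|) (nhdsWithin (x m) {x m}ᶜ)
      (nhds (Real.exp (G (x m)) / |x m|)) := by
    apply Tendsto.mono_left ?_ nhdsWithin_le_nhds
    exact ((Real.continuous_exp.continuousAt.comp hGc).div_const |x m|).tendsto
  have hev : (fun t => ‖φ t‖ / |t - x m|) =ᶠ[nhdsWithin (x m) {x m}ᶜ]
      (fun t => Real.exp (G t) / |x m|) := by
    have hIo : Ioo (x m - δ) (x m + δ) ∈ nhdsWithin (x m) {x m}ᶜ :=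
      nhdsWithin_le_nhds (Ioo_mem_nhds hwmem.1 hwmem.2)
    filter_upwards [hIo, self_mem_nhdsWithin] with t htI htne
    have htne' : t ≠ x m := htne
    have hfac : ∀ j, 1 - t / x j ≠ 0 := by
      intro j
      have hxj : x j ≠ 0 := (hneg j).ne
      intro h
      have hts : t = x j := by
        field_simp at h
        linarith
      by_cases hjm : j = m
      · rw [hjm] at hts
        exact htne' hts
      · have hs := hsep j hjm t htI
        rw [hts] at hs
        simp only [sub_self, abs_zero] at hs
        linarith
    have hFne : F t ≠ 0 := hasProd_ne_zero (hF t) hfac (hsumlog t)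
    have htsum := hasSum_log_of_hasProd (hF t) hfac hFne
    have hone : HasSum (fun j => if j = m then Real.log (1 - t / x m) else 0)
        (Real.log (1 - t / x m)) := hasSum_ite_eq m _
    have hsub := htsum.sub hone
    have hfun : (fun j => Real.log (1 - t / x j) - (if j = m then Real.log (1 - t/x m) else 0))
        = fun j => if j = m then (0:ℝ) else Real.log (1 - t / x j) := by
      funext j
      by_cases hjm : j = m
      · subst hjm; simp
      · simp [hjm]
    rw [hfun] at hsub
    have hGt : G t = Real.log (F t) - Real.log (1 - t / x m) := hsub.tsum_eq
    have h1 : |F t| = Real.exp (Real.log (F t)) := (Real.exp_log_eq_abs hFne).symm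
    have h2 : Real.exp (Real.log (F t)) = Real.exp (G t) * Real.exp (Real.log (1 - t/x m)) := by
      rw [← Real.exp_add, hGt]
      ring_nf
    have h3 : Real.exp (Real.log (1 - t/x m)) = |1 - t / x m| := Real.exp_log_eq_abs (hfac m)
    have h4 : |1 - t / x m| = |t - x m| / |x m| := by
      rw [show (1 : ℝ) - t / x m = (x m - t)/ x m by field_simp, abs_div, abs_sub_comm]
    have hφt : ‖φ t‖ = |F t| := by rw [hφF t]; exact Complex.norm_real _
    have htxm : |t - x m| ≠ 0 := by
      simp only [abs_ne_zero]
      exact sub_ne_zero.mpr htne'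
    rw [hφt, h1, h2, h3, h4]
    field_simp
  have hzero_eq : (0:ℝ) = Real.exp (G (x m)) / |x m| :=
    tendsto_nhds_unique (hnorm0.congr' hev) hexp
  have hp : 0 < Real.exp (G (x m)) / |x m| := by positivity
  linarith
end B



theorem stmt5 (q : ℝ) (hq : q ∈ Set.Ioo (0 : ℝ) 1) (x : ℕ → ℝ)
    (hanti : StrictAnti x) (hneg : ∀ j, x j < 0)
    (hzero : ∀ j, deformedExp ((x j : ℂ)) ((q : ℂ)) = 0)
    (hprod : ∀ z : ℂ, HasProd (fun j : ℕ => 1 - z / (x j : ℂ)) (deformedExp z (q : ℂ))) :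
    ∀ k : ℕ, HasSum (fun j : ℕ => 1 / (x k - q * x j)) 0 := by
  obtain ⟨hq0, hq1⟩ := hq
  intro k
  have hqC : ‖(q : ℂ)‖ ≤ 1 := by
    rw [Complex.norm_real, Real.norm_eq_abs, abs_of_pos hq0]
    exact hq1.le
  set φ : ℝ → ℂ := fun t => deformedExp (t : ℂ) (q : ℂ) with hφ
  set F : ℝ → ℝ := fun t => (deformedExp (t : ℂ) (q : ℂ)).re with hF
  have hre : ∀ t : ℝ, HasProd (fun j => 1 - t / x j) (F t) ∧ (φ t).im = 0 := by
    intro t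
    have hcast : (fun j : ℕ => 1 - (t : ℂ) / (x j : ℂ))
        = fun j : ℕ => ((1 - t / x j : ℝ) : ℂ) := by
      funext j; push_cast; ring
    have h := hprod (t : ℂ)
    rw [hcast] at h
    exact hasProd_re_of_ofReal h
  have hφF : ∀ t : ℝ, φ t = ((F t : ℝ) : ℂ) := by
    intro t
    apply Complex.ext
    · simp [hφ, hF]
    · rw [(hre t).2]
      simp
  have hsumInv : Summable (fun j => 1 / |x j|) := summable_inv_abs hneg (hprod 1)
  have habs : Tendsto (fun j => |x j|) atTop atTop := by
    have h0 : Tendsto (fun j => 1 / |x j|) atTop (nhds 0) := by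
      rw [← Nat.cofinite_eq_atTop]
      exact hsumInv.tendsto_cofinite_zero
    have h1 : Tendsto (fun j => 1 / |x j|) atTop (nhdsWithin 0 (Ioi 0)) := by
      apply tendsto_nhdsWithin_of_tendsto_nhds_of_eventually_within _ h0
      filter_upwards with j
      have : x j ≠ 0 := (hneg j).ne
      have : 0 < |x j| := abs_pos.mpr this
      exact mem_Ioi.mpr (by positivity)
    have h2 := h1.inv_tendsto_nhdsGT_zero
    have h3 : (fun j => 1 / |x j|)⁻¹ = fun j => |x j| := by
      funext j; simp
    rwa [h3] at h2
  have hφd : ∀ t : ℝ, HasDerivAt φ (deformedExp ((q : ℂ) * (t : ℂ)) (q : ℂ)) t :=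
    fun t => (deformedExp_hasDerivAt (q : ℂ) hqC (t : ℂ)).comp_ofReal
  set w : ℝ := x k / q with hw
  have hqw : q * w = x k := by
    rw [hw]
    field_simp
  have hwx : ∀ j, w ≠ x j := by
    intro m heq
    have hxm : ∀ j, j ≠ m → x m ≠ x j := by
      intro j hj h
      exact hj (hanti.injective h.symm)
    have hd0 : HasDerivAt φ 0 (x m) := by
      have := hφd (x m)
      have hcast : ((q : ℂ) * ((x m : ℝ) : ℂ)) = ((x k : ℝ) : ℂ) := by
        rw [← heq]
        calc ((q : ℂ) * ((w : ℝ) : ℂ)) = (((q * w : ℝ) : ℝ) : ℂ) := by push_cast; ring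
          _ = ((x k : ℝ) : ℂ) := by rw [hqw]
      rw [hcast, hzero k] at this
      exact this
    exact resultB hneg hsumInv habs (fun t => (hre t).1) hφF hxm hd0 (hzero m)
  have hDF : HasDerivAt F ((deformedExp ((q : ℂ) * (w : ℂ)) (q : ℂ)).re) w := by
    have h1 := hφd w
    exact (Complex.reCLM.hasFDerivAt).comp_hasDerivAt w h1
  have hD0 : (deformedExp ((q : ℂ) * (w : ℂ)) (q : ℂ)).re = 0 := by
    have hcast : ((q : ℂ) * ((w : ℝ) : ℂ)) = ((x k : ℝ) : ℂ) := by
      calc ((q : ℂ) * ((w : ℝ) : ℂ)) = (((q * w : ℝ) : ℝ) : ℂ) := by push_cast; ring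
        _ = ((x k : ℝ) : ℂ) := by rw [hqw]
    rw [hcast, hzero k]
    simp
  rw [hD0] at hDF
  have hA := resultA hneg hsumInv habs (fun t => (hre t).1) hDF hwx
  rw [zero_div] at hA
  have hB := hA.mul_left (1 / q)
  rw [mul_zero] at hB
  have hfun : (fun j : ℕ => (1/q) * (1/(w - x j))) = (fun j : ℕ => 1 / (x k - q * x j)) := by
    funext j
    rw [one_div_mul_one_div]
    congr 1
    rw [mul_sub, hqw]
  rw [hfun] at hB
  exact hB
end

section
/- Let q ∈ (0,1), let k ≥ 1 be an integer and let w ∈ ℂ with w ≠ 0. Then the series Σ_{i≥1} (−1)^i·(k!·k^i/(k+i)!)·w^{i+1}·q^{i(i+1)/2} converges absolutely, and f(−k·q^{1−k}·w; q) = 0 if and only if w = 1 + k!·Σ_{i=1}^{k−1} (−1)^i·(k^{−i−1}/(k−i−1)!)·w^{−i}·q^{i(i+1)/2} − k!·Σ_{i=1}^{∞} (−1)^i·(k^i/(k+i)!)·w^{i+1}·q^{i(i+1)/2}. -/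
private lemma half_cast (a b : ℕ) (h : a % 2 = 0 ∨ b % 2 = 0) :
    2 * ((a * b / 2 : ℕ) : ℤ) = (a : ℤ) * (b : ℤ) := by
  have hd : 2 ∣ a * b := by
    rcases h with h | h
    · exact Dvd.dvd.mul_right (by omega) b
    · exact Dvd.dvd.mul_left (by omega) a
  obtain ⟨c, hc⟩ := hd
  rw [hc, Nat.mul_div_cancel_left c (by norm_num)]
  exact_mod_cast hc.symm

private lemma half_pred_cast (n : ℕ) :
    2 * ((n * (n - 1) / 2 : ℕ) : ℤ) = (n : ℤ) * (n : ℤ) - (n : ℤ) := by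
  cases n with
  | zero => simp
  | succ m =>
    have h := half_cast (m + 1) m (by omega)
    have hm : (m + 1) - 1 = m := rfl
    rw [hm]
    push_cast at h ⊢
    linarith

set_option maxHeartbeats 800000 in
theorem stmt9 (q : ℝ) (hq : q ∈ Set.Ioo (0 : ℝ) 1) (k : ℕ) (hk : 1 ≤ k)
    (w : ℂ) (hw : w ≠ 0) :
    Summable (fun i : ℕ => ‖(-1 : ℂ) ^ (i + 1) *
      ((k.factorial : ℂ) * (k : ℂ) ^ (i + 1) / ((k + (i + 1)).factorial : ℂ)) *
      w ^ (i + 2) * (q : ℂ) ^ ((i + 1) * (i + 2) / 2)‖) ∧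
    (deformedExp (-(k : ℂ) * (q : ℂ) ^ ((1 : ℤ) - (k : ℤ)) * w) (q : ℂ) = 0 ↔
      w = 1 + (k.factorial : ℂ) * (∑ i ∈ Finset.Icc 1 (k - 1), (-1 : ℂ) ^ i *
            ((k : ℂ) ^ (-(i : ℤ) - 1) / ((k - i - 1).factorial : ℂ)) *
            w ^ (-(i : ℤ)) * (q : ℂ) ^ (i * (i + 1) / 2))
          - (k.factorial : ℂ) * ∑' i : ℕ, (-1 : ℂ) ^ (i + 1) *
            ((k : ℂ) ^ (i + 1) / ((k + (i + 1)).factorial : ℂ)) *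
            w ^ (i + 2) * (q : ℂ) ^ ((i + 1) * (i + 2) / 2)) := by
  obtain ⟨hq0, hq1⟩ := hq
  set Q : ℂ := (q : ℂ) with hQdef
  have hQ0 : Q ≠ 0 := by
    simp only [hQdef, ne_eq, Complex.ofReal_eq_zero]
    exact hq0.ne'
  have hk0 : (k : ℂ) ≠ 0 := Nat.cast_ne_zero.2 (by omega)
  set x : ℂ := -(k : ℂ) * Q ^ ((1 : ℤ) - (k : ℤ)) * w with hxdef
  set a : ℕ → ℂ := fun n => x ^ n * Q ^ (n * (n - 1) / 2) / (n.factorial : ℂ) with hadef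
  -- normal form of a n
  have ha_eq : ∀ n : ℕ, a n = (-1) ^ n * (k : ℂ) ^ n * w ^ n *
      Q ^ (((n * (n - 1) / 2 : ℕ) : ℤ) + (1 - (k : ℤ)) * n) / (n.factorial : ℂ) := by
    intro n
    have hpow : (Q ^ ((1 : ℤ) - (k : ℤ))) ^ n = Q ^ ((1 - (k : ℤ)) * n) := by
      rw [← zpow_natCast (Q ^ ((1 : ℤ) - (k : ℤ))) n, ← zpow_mul]
    have hx : x ^ n = (-1) ^ n * (k : ℂ) ^ n * w ^ n * Q ^ ((1 - (k : ℤ)) * n) := by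
      calc x ^ n = (-(k : ℂ)) ^ n * (Q ^ ((1 : ℤ) - (k : ℤ))) ^ n * w ^ n := by
            rw [hxdef, mul_pow, mul_pow]
        _ = (-1) ^ n * (k : ℂ) ^ n * w ^ n * Q ^ ((1 - (k : ℤ)) * n) := by
            rw [hpow, neg_pow]; ring
    rw [hadef]
    simp only
    rw [zpow_add₀ hQ0, zpow_natCast, hx]
    ring
  -- summability
  have hna : Summable fun n => ‖a n‖ := by
    apply Summable.of_nonneg_of_le (fun n => norm_nonneg _) (fun n => ?_)
      (Real.summable_pow_div_factorial ‖x‖)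
    rw [hadef]
    simp only [norm_div, norm_mul, norm_pow, Complex.norm_natCast]
    have hQle : ‖Q‖ ≤ 1 := by
      rw [hQdef]
      simp only [Complex.norm_real, Real.norm_eq_abs, abs_of_pos hq0]
      exact hq1.le
    have h1 : ‖Q‖ ^ (n * (n - 1) / 2) ≤ 1 := pow_le_one₀ (norm_nonneg _) hQle
    have h2 : (0:ℝ) < n.factorial := by exact_mod_cast n.factorial_pos
    have h3 : ‖x‖ ^ n * ‖Q‖ ^ (n * (n - 1) / 2) ≤ ‖x‖ ^ n := by
      nlinarith [pow_nonneg (norm_nonneg x) n, pow_nonneg (norm_nonneg Q) (n * (n - 1) / 2)]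
    exact div_le_div_of_nonneg_right h3 h2.le
  have ha : Summable a := hna.of_norm
  -- the constant C
  set C : ℂ := (-1) ^ (k + 1) * (k : ℂ) ^ k * w ^ (k - 1) *
      Q ^ (-((k * (k - 1) / 2 : ℕ) : ℤ)) / (k.factorial : ℂ) with hCdef
  have hfac0 : ∀ m : ℕ, ((m.factorial : ℂ)) ≠ 0 := fun m => Nat.cast_ne_zero.2 m.factorial_pos.ne'
  have hC : C ≠ 0 := by
    rw [hCdef]
    apply div_ne_zero _ (hfac0 k)
    exact mul_ne_zero (mul_ne_zero (mul_ne_zero (pow_ne_zero _ (by norm_num))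
      (pow_ne_zero _ hk0)) (pow_ne_zero _ hw)) (zpow_ne_zero _ hQ0)
  have hCk : C * (k.factorial : ℂ) = (-1) ^ (k + 1) * (k : ℂ) ^ k * w ^ (k - 1) *
      Q ^ (-((k * (k - 1) / 2 : ℕ) : ℤ)) := by
    rw [hCdef, div_mul_cancel₀ _ (hfac0 k)]
  -- the tail summand
  set u : ℕ → ℂ := fun i => (-1 : ℂ) ^ (i + 1) *
      ((k : ℂ) ^ (i + 1) / ((k + (i + 1)).factorial : ℂ)) *
      w ^ (i + 2) * Q ^ ((i + 1) * (i + 2) / 2) with hudef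
  -- tail identity
  have h_tail : ∀ i : ℕ, a (i + (k + 1)) = -C * (k.factorial : ℂ) * u i := by
    intro i
    rw [ha_eq (i + (k + 1))]
    have hfac : (((i + (k + 1)).factorial : ℂ)) = (((k + (i + 1)).factorial : ℂ)) := by
      rw [show i + (k + 1) = k + (i + 1) by omega]
    have hsign : ((-1 : ℂ)) ^ (i + (k + 1)) = -((-1) ^ (k + 1) * (-1) ^ (i + 1)) := by
      have h : ((-1 : ℂ)) ^ ((k + 1) + (i + 1)) = (-1) ^ (i + (k + 1)) * (-1) ^ 1 := by
        rw [← pow_add]; congr 1; omega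
      rw [pow_add] at h
      simp only [pow_one] at h
      linear_combination -h
    have hkpow : (k : ℂ) ^ (i + (k + 1)) = (k : ℂ) ^ k * (k : ℂ) ^ (i + 1) := by
      rw [← pow_add]; congr 1; omega
    have hwpow : w ^ (i + (k + 1)) = w ^ (k - 1) * w ^ (i + 2) := by
      rw [← pow_add]; congr 1; omega
    have hExp : (((i + (k + 1)) * ((i + (k + 1)) - 1) / 2 : ℕ) : ℤ) + (1 - (k : ℤ)) * (i + (k + 1) : ℕ)
        = -((k * (k - 1) / 2 : ℕ) : ℤ) + (((i + 1) * (i + 2) / 2 : ℕ) : ℤ) := by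
      have h1 := half_pred_cast (i + (k + 1))
      have h2 := half_pred_cast k
      have h3 := half_cast (i + 1) (i + 2) (by omega)
      push_cast at h1 h2 h3 ⊢
      apply mul_left_cancel₀ (a := (2 : ℤ)) (by norm_num)
      linear_combination h1 + h2 - h3
    have hQsplit : Q ^ ((((i + (k + 1)) * ((i + (k + 1)) - 1) / 2 : ℕ) : ℤ) + (1 - (k : ℤ)) * (i + (k + 1) : ℕ))
        = Q ^ (-((k * (k - 1) / 2 : ℕ) : ℤ)) * Q ^ ((i + 1) * (i + 2) / 2) := by
      rw [hExp, zpow_add₀ hQ0, zpow_natCast]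
    rw [neg_mul, hCk, hudef, hQsplit, hsign, hkpow, hwpow, hfac]
    ring
  -- head identities
  have h_head : ∀ i ∈ Finset.Icc 1 (k - 1), a (k - 1 - i) =
      C * (k.factorial : ℂ) * ((-1 : ℂ) ^ i *
        ((k : ℂ) ^ (-(i : ℤ) - 1) / ((k - i - 1).factorial : ℂ)) *
        w ^ (-(i : ℤ)) * Q ^ (i * (i + 1) / 2)) := by
    intro i hi
    rw [Finset.mem_Icc] at hi
    obtain ⟨hi1, hi2⟩ := hi
    rw [ha_eq (k - 1 - i)]
    have hki : (k : ℂ) ^ (-(i : ℤ) - 1) = ((k : ℂ) ^ (i + 1))⁻¹ := by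
      rw [show (-(i : ℤ) - 1) = -(((i + 1 : ℕ) : ℤ)) by push_cast; ring, zpow_neg, zpow_natCast]
    have hwi : w ^ (-(i : ℤ)) = (w ^ i)⁻¹ := by
      rw [zpow_neg, zpow_natCast]
    have hsign : ((-1 : ℂ)) ^ (k - 1 - i) = (-1) ^ (k + 1) * (-1) ^ i := by
      rw [← pow_add, show (k + 1) + i = (k - 1 - i) + 2 * (i + 1) by omega, pow_add, pow_mul]
      norm_num
    have hkinv : (k : ℂ) ^ (k - 1 - i) = (k : ℂ) ^ k * ((k : ℂ) ^ (i + 1))⁻¹ := by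
      have hkpow : (k : ℂ) ^ k = (k : ℂ) ^ (k - 1 - i) * (k : ℂ) ^ (i + 1) := by
        rw [← pow_add]; congr 1; omega
      rw [hkpow]
      exact (mul_inv_cancel_right₀ (pow_ne_zero _ hk0) _).symm
    have hwinv : w ^ (k - 1 - i) = w ^ (k - 1) * (w ^ i)⁻¹ := by
      have hwpow : w ^ (k - 1) = w ^ (k - 1 - i) * w ^ i := by
        rw [← pow_add]; congr 1; omega
      rw [hwpow]
      exact (mul_inv_cancel_right₀ (pow_ne_zero _ hw) _).symm
    have hfac : (((k - i - 1).factorial : ℂ)) = (((k - 1 - i).factorial : ℂ)) := by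
      rw [show k - i - 1 = k - 1 - i by omega]
    have hExp : (((k - 1 - i) * ((k - 1 - i) - 1) / 2 : ℕ) : ℤ) + (1 - (k : ℤ)) * (k - 1 - i : ℕ)
        = -((k * (k - 1) / 2 : ℕ) : ℤ) + ((i * (i + 1) / 2 : ℕ) : ℤ) := by
      have h1 := half_pred_cast (k - 1 - i)
      have h2 := half_pred_cast k
      have h3 := half_cast i (i + 1) (by omega)
      have c0 : ((k - 1 - i : ℕ) : ℤ) = (k : ℤ) - 1 - i := by omega
      rw [c0] at h1 ⊢
      push_cast at h1 h2 h3 ⊢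
      apply mul_left_cancel₀ (a := (2 : ℤ)) (by norm_num)
      linear_combination h1 + h2 - h3
    have hQsplit : Q ^ ((((k - 1 - i) * ((k - 1 - i) - 1) / 2 : ℕ) : ℤ) + (1 - (k : ℤ)) * (k - 1 - i : ℕ))
        = Q ^ (-((k * (k - 1) / 2 : ℕ) : ℤ)) * Q ^ (i * (i + 1) / 2) := by
      rw [hExp, zpow_add₀ hQ0, zpow_natCast]
    rw [hCk, hQsplit, hsign, hki, hwi, hfac, hkinv, hwinv]
    ring
  -- a (k-1) = C
  have h_km1 : a (k - 1) = C := by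
    rw [ha_eq (k - 1), hCdef]
    have hsign : ((-1 : ℂ)) ^ (k - 1) = (-1) ^ (k + 1) := by
      rw [show k + 1 = (k - 1) + 2 by omega, pow_add]
      norm_num
    have hkpow : (k : ℂ) ^ k = (k : ℂ) ^ (k - 1) * (k : ℂ) := by
      rw [← pow_succ]; congr 1; omega
    have hfaceq : (k : ℂ) * ((k - 1).factorial : ℂ) = ((k.factorial : ℂ)) := by
      exact_mod_cast Nat.mul_factorial_pred (by omega : k ≠ 0)
    have hExp : (((k - 1) * ((k - 1) - 1) / 2 : ℕ) : ℤ) + (1 - (k : ℤ)) * (k - 1 : ℕ)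
        = -((k * (k - 1) / 2 : ℕ) : ℤ) := by
      have h1 := half_pred_cast (k - 1)
      have h2 := half_pred_cast k
      have c0 : ((k - 1 : ℕ) : ℤ) = (k : ℤ) - 1 := by omega
      rw [c0] at h1 ⊢
      apply mul_left_cancel₀ (a := (2 : ℤ)) (by norm_num)
      linear_combination h1 + h2
    rw [hExp, hsign, div_eq_div_iff (hfac0 (k - 1)) (hfac0 k), ← hfaceq, hkpow]
    ring
  -- a k = -C * w
  have h_k : a k = -C * w := by
    rw [ha_eq k, hCdef]
    have hsign : ((-1 : ℂ)) ^ k = -((-1 : ℂ)) ^ (k + 1) := by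
      rw [pow_succ]; ring
    have hwpow : w ^ k = w ^ (k - 1) * w := by
      rw [← pow_succ]; congr 1; omega
    have hExp : ((k * (k - 1) / 2 : ℕ) : ℤ) + (1 - (k : ℤ)) * (k : ℕ)
        = -((k * (k - 1) / 2 : ℕ) : ℤ) := by
      have h2 := half_pred_cast k
      apply mul_left_cancel₀ (a := (2 : ℤ)) (by norm_num)
      push_cast at h2 ⊢
      linear_combination 2 * h2
    rw [hExp, hsign, hwpow]
    ring
  -- assemble
  have hsum_range : ∑ n ∈ Finset.range k, a n =
      C + C * (k.factorial : ℂ) * (∑ i ∈ Finset.Icc 1 (k - 1), (-1 : ℂ) ^ i *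
        ((k : ℂ) ^ (-(i : ℤ) - 1) / ((k - i - 1).factorial : ℂ)) *
        w ^ (-(i : ℤ)) * Q ^ (i * (i + 1) / 2)) := by
    rw [← Finset.sum_range_reflect]
    have hsplit : Finset.range k = insert 0 (Finset.Icc 1 (k - 1)) := by
      ext n; simp only [Finset.mem_range, Finset.mem_insert, Finset.mem_Icc]; omega
    rw [hsplit, Finset.sum_insert (by simp), Nat.sub_zero, h_km1,
      Finset.mul_sum, Finset.sum_congr rfl h_head]
  have hf : deformedExp x Q = C + C * (k.factorial : ℂ) * (∑ i ∈ Finset.Icc 1 (k - 1), (-1 : ℂ) ^ i *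
        ((k : ℂ) ^ (-(i : ℤ) - 1) / ((k - i - 1).factorial : ℂ)) *
        w ^ (-(i : ℤ)) * Q ^ (i * (i + 1) / 2)) + (-C * w) +
      (-C * (k.factorial : ℂ)) * ∑' i, u i := by
    have h0 : deformedExp x Q = ∑' n, a n := rfl
    rw [h0, ← Summable.sum_add_tsum_nat_add (k + 1) ha, Finset.sum_range_succ, hsum_range, h_k]
    have h1 : ∑' i, a (i + (k + 1)) = (-C * (k.factorial : ℂ)) * ∑' i, u i := by
      rw [← tsum_mul_left]
      exact tsum_congr h_tail
    rw [h1]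
  constructor
  · -- summability
    have htail : Summable fun i => ‖a (i + (k + 1))‖ := (summable_nat_add_iff (k + 1)).2 hna
    apply (htail.mul_left (‖C⁻¹‖)).congr
    intro i
    have hv : ((-1 : ℂ) ^ (i + 1) *
        ((k.factorial : ℂ) * (k : ℂ) ^ (i + 1) / ((k + (i + 1)).factorial : ℂ)) *
        w ^ (i + 2) * Q ^ ((i + 1) * (i + 2) / 2)) = -(C⁻¹ * a (i + (k + 1))) := by
      rw [h_tail i, show -(C⁻¹ * (-C * (k.factorial : ℂ) * u i)) =
        (C⁻¹ * C) * ((k.factorial : ℂ) * u i) from by ring, inv_mul_cancel₀ hC, one_mul, hudef]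
      ring
    rw [hv, norm_neg, norm_mul]
  · rw [hf]
    have hrw : C + C * (k.factorial : ℂ) * (∑ i ∈ Finset.Icc 1 (k - 1), (-1 : ℂ) ^ i *
        ((k : ℂ) ^ (-(i : ℤ) - 1) / ((k - i - 1).factorial : ℂ)) *
        w ^ (-(i : ℤ)) * Q ^ (i * (i + 1) / 2)) + (-C * w) +
        (-C * (k.factorial : ℂ)) * ∑' i, u i =
        C * ((1 + (k.factorial : ℂ) * (∑ i ∈ Finset.Icc 1 (k - 1), (-1 : ℂ) ^ i *
        ((k : ℂ) ^ (-(i : ℤ) - 1) / ((k - i - 1).factorial : ℂ)) *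
        w ^ (-(i : ℤ)) * Q ^ (i * (i + 1) / 2)) - (k.factorial : ℂ) * ∑' i, u i) - w) := by
      ring
    rw [hrw, mul_eq_zero, or_iff_right hC, sub_eq_zero, eq_comm]
end

section
/- For every integer k ≥ 1, every q ∈ ℂ with |q| ≤ 1/20 and every w ∈ ℂ with |w − 1| ≤ 1/2, the series defining F_k(w;q) converges absolutely and |F_k(w;q)| ≤ 5. -/
/-- `α_i(k) = ∏_{l=1}^{i} (1 - l/k)`. -/
noncomputable def alphaCoef (i k : ℕ) : ℝ :=
  ∏ l ∈ Finset.Icc 1 i, (1 - (l : ℝ) / (k : ℝ))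

/-- `α_i(-k)⁻¹ = k^i · k! / (k+i)!`. -/
noncomputable def alphaNegInv (i k : ℕ) : ℝ :=
  (k : ℝ) ^ i * (k.factorial : ℝ) / ((k + i).factorial : ℝ)

/-- The `i`-th term of the series defining `F_k(w;q)`. -/
noncomputable def Fterm (k : ℕ) (w q : ℂ) (i : ℕ) : ℂ :=
  (-1 : ℂ) ^ i * ((alphaCoef i k : ℂ) * w ^ (-(i : ℤ)) - (alphaNegInv i k : ℂ) * w ^ (i + 1)) *
    q ^ (i * (i + 1) / 2 - 1)

/-- `F_k(w;q) = ∑_{i≥1} (-1)^i [α_i(k) w^{-i} - α_i(-k)⁻¹ w^{i+1}] q^{i(i+1)/2 - 1}`. -/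
noncomputable def FK (k : ℕ) (w q : ℂ) : ℂ :=
  ∑' i : ℕ, Fterm k w q (i + 1)

lemma abs_alphaCoef_le (i k : ℕ) (hk : 1 ≤ k) : |alphaCoef i k| ≤ 1 := by
  unfold alphaCoef
  have hk0 : (0:ℝ) < (k:ℝ) := by exact_mod_cast hk
  by_cases h : k ≤ i
  · rw [Finset.prod_eq_zero (Finset.mem_Icc.mpr ⟨hk, h⟩)]
    · simp
    · rw [div_self hk0.ne', sub_self]
  · push_neg at h
    have h1 : ∀ l ∈ Finset.Icc 1 i, (0:ℝ) ≤ 1 - (l:ℝ)/(k:ℝ) := by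
      intro l hl
      rw [Finset.mem_Icc] at hl
      have hlk : (l:ℝ) ≤ (k:ℝ) := by exact_mod_cast le_of_lt (lt_of_le_of_lt hl.2 h)
      have := div_le_one_of_le₀ hlk hk0.le
      linarith
    rw [abs_of_nonneg (Finset.prod_nonneg h1)]
    apply Finset.prod_le_one h1
    intro l hl
    have : (0:ℝ) ≤ (l:ℝ)/(k:ℝ) := by positivity
    linarith

lemma alphaNegInv_nonneg (i k : ℕ) : 0 ≤ alphaNegInv i k := by
  unfold alphaNegInv; positivity

lemma alphaNegInv_le_one (i k : ℕ) : alphaNegInv i k ≤ 1 := by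
  unfold alphaNegInv
  rw [div_le_one (by positivity)]
  have h : k ^ i * k.factorial ≤ (k + i).factorial := by
    calc k ^ i * k.factorial ≤ (k+1) ^ i * k.factorial :=
          Nat.mul_le_mul_right _ (Nat.pow_le_pow_left (Nat.le_succ k) i)
      _ = k.factorial * (k+1) ^ i := Nat.mul_comm _ _
      _ ≤ (k + i).factorial := Nat.factorial_mul_pow_le_factorial
  calc ((k:ℝ))^i * k.factorial = ((k ^ i * k.factorial : ℕ) : ℝ) := by push_cast; ring
    _ ≤ ((k + i).factorial : ℝ) := by exact_mod_cast h

theorem stmt10 (k : ℕ) (hk : 1 ≤ k) (q : ℂ) (hq : ‖q‖ ≤ 1 / 20)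
    (w : ℂ) (hw : ‖w - 1‖ ≤ 1 / 2) :
    Summable (fun i : ℕ => ‖Fterm k w q (i + 1)‖) ∧
    ‖FK k w q‖ ≤ 5 := by
  have hq0 : 0 ≤ ‖q‖ := norm_nonneg q
  have hwlb : (1:ℝ)/2 ≤ ‖w‖ := by
    have h1 : ‖w - (w - 1)‖ ≤ ‖w‖ + ‖w - 1‖ :=
      norm_sub_le _ _
    rw [sub_sub_cancel] at h1
    simp only [norm_one] at h1
    linarith
  have hwub : ‖w‖ ≤ 3/2 := by
    have h1 : ‖w - 1 + 1‖ ≤ ‖w - 1‖ + ‖(1:ℂ)‖ :=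
      norm_add_le _ _
    simp only [sub_add_cancel, norm_one] at h1
    linarith
  have hw0 : w ≠ 0 := by
    intro h; rw [h] at hwlb; norm_num at hwlb
  have key : ∀ n : ℕ, ‖Fterm k w q (n + 1)‖ ≤
      2 * (1/10)^n + (9/4) * (3/40)^n := by
    intro n
    set i := n + 1 with hi
    have hwpow1 : ‖w ^ (-(i : ℤ))‖ ≤ 2 ^ i := by
      rw [norm_zpow, zpow_neg, zpow_natCast]
      have h1 : ((1:ℝ)/2)^i ≤ ‖w‖ ^ i :=
        pow_le_pow_left₀ (by norm_num) hwlb i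
      have h2 : (‖w‖ ^ i)⁻¹ ≤ (((1:ℝ)/2)^i)⁻¹ :=
        inv_anti₀ (by positivity) h1
      have h3 : (((1:ℝ)/2)^i)⁻¹ = 2 ^ i := by
        rw [one_div, inv_pow, inv_inv]
      linarith
    have hwpow2 : ‖w ^ (i + 1)‖ ≤ (3/2) ^ (i+1) := by
      rw [norm_pow]
      exact pow_le_pow_left₀ (norm_nonneg w) hwub (i+1)
    have hqpow : ‖q ^ (i * (i + 1) / 2 - 1)‖ ≤ (1/20) ^ n := by
      rw [norm_pow]
      have hge : n ≤ i * (i + 1) / 2 - 1 := by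
        have h2 : (n+1) * 2 ≤ (n+1) * (n+2) := Nat.mul_le_mul_left _ (by omega)
        have h3 : (n+1) * 2 / 2 ≤ (n+1) * (n+2) / 2 := Nat.div_le_div_right h2
        have h5 : i * (i+1) = (n+1)*(n+2) := by rw [hi]
        rw [h5]
        omega
      calc ‖q‖ ^ (i * (i + 1) / 2 - 1) ≤ ‖q‖ ^ n :=
            pow_le_pow_of_le_one hq0 (by linarith) hge
        _ ≤ (1/20)^n := pow_le_pow_left₀ hq0 hq n
    have hterm : ‖Fterm k w q i‖ ≤ (2^i + (3/2)^(i+1)) * (1/20)^n := by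
      unfold Fterm
      rw [norm_mul, norm_mul]
      have h1 : ‖(-1:ℂ)^i‖ = 1 := by
        rw [norm_pow]; simp
      rw [h1, one_mul]
      have h2 : ‖(alphaCoef i k : ℂ) * w ^ (-(i : ℤ)) -
          (alphaNegInv i k : ℂ) * w ^ (i + 1)‖ ≤ 2^i + (3/2)^(i+1) := by
        have t1 : ‖(alphaCoef i k : ℂ) * w ^ (-(i : ℤ)) -
              (alphaNegInv i k : ℂ) * w ^ (i + 1)‖
            ≤ ‖(alphaCoef i k : ℂ) * w ^ (-(i : ℤ))‖ +
              ‖(alphaNegInv i k : ℂ) * w ^ (i + 1)‖ :=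
          norm_sub_le _ _
        have ha2 : ‖((alphaCoef i k : ℝ) : ℂ)‖ ≤ 1 := by
          rw [Complex.norm_real, Real.norm_eq_abs]
          exact abs_alphaCoef_le i k hk
        have ha3 : ‖((alphaNegInv i k : ℝ) : ℂ)‖ ≤ 1 := by
          rw [Complex.norm_real, Real.norm_eq_abs, abs_of_nonneg (alphaNegInv_nonneg i k)]
          exact alphaNegInv_le_one i k
        have t2 : ‖(alphaCoef i k : ℂ) * w ^ (-(i : ℤ))‖ ≤ 1 * 2^i := by
          rw [norm_mul]
          exact mul_le_mul ha2 hwpow1 (norm_nonneg _) (by norm_num)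
        have t3 : ‖(alphaNegInv i k : ℂ) * w ^ (i + 1)‖ ≤ 1 * (3/2)^(i+1) := by
          rw [norm_mul]
          exact mul_le_mul ha3 hwpow2 (norm_nonneg _) (by norm_num)
        linarith
      have h4 : (0:ℝ) ≤ 2^i + (3/2)^(i+1) := by positivity
      exact mul_le_mul h2 hqpow (norm_nonneg _) h4
    rw [hi] at hterm
    have e1 : (1/10:ℝ)^n = 2^n * (1/20)^n := by rw [← mul_pow]; norm_num
    have e2 : (3/40:ℝ)^n = (3/2:ℝ)^n * (1/20)^n := by rw [← mul_pow]; norm_num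
    have heq : ((2:ℝ)^(n+1) + (3/2)^(n+1+1)) * (1/20)^n
        = 2*(1/10)^n + (9/4)*(3/40)^n := by
      rw [e1, e2, pow_succ, pow_succ, pow_succ]
      ring
    rw [heq] at hterm
    exact hterm
  have hs1 : Summable (fun n : ℕ => 2 * (1/10:ℝ)^n) :=
    (summable_geometric_of_lt_one (by norm_num) (by norm_num)).mul_left 2
  have hs2 : Summable (fun n : ℕ => (9/4) * (3/40:ℝ)^n) :=
    (summable_geometric_of_lt_one (by norm_num) (by norm_num)).mul_left (9/4)
  have hsb : Summable (fun n : ℕ => 2 * (1/10:ℝ)^n + (9/4) * (3/40)^n) := hs1.add hs2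
  have hsum : Summable (fun i : ℕ => ‖Fterm k w q (i + 1)‖) :=
    Summable.of_nonneg_of_le (fun n => norm_nonneg _) key hsb
  refine ⟨hsum, ?_⟩
  have hsum' : Summable (fun i : ℕ => ‖Fterm k w q (i + 1)‖) := by
    exact hsum
  have hFK : ‖FK k w q‖ ≤ ∑' n, ‖Fterm k w q (n + 1)‖ := by
    unfold FK
    have h := norm_tsum_le_tsum_norm hsum'
    exact h
  have h2 : (∑' n, ‖Fterm k w q (n + 1)‖) ≤
      ∑' n : ℕ, (2 * (1/10:ℝ)^n + (9/4) * (3/40)^n) :=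
    Summable.tsum_le_tsum key hsum hsb
  have h3 : (∑' n : ℕ, (2 * (1/10:ℝ)^n + (9/4) * (3/40)^n)) = 20/9 + 90/37 := by
    rw [Summable.tsum_add hs1 hs2, tsum_mul_left, tsum_mul_left,
      tsum_geometric_of_lt_one (by norm_num) (by norm_num),
      tsum_geometric_of_lt_one (by norm_num) (by norm_num)]
    norm_num
  rw [h3] at h2
  linarith
end

section
/- For every integer k ≥ 1, every q ∈ ℂ with |q| ≤ 1/20 and all w, w′ ∈ ℂ with |w − 1| ≤ 1/2 and |w′ − 1| ≤ 1/2, one has |F_k(w;q) − F_k(w′;q)| ≤ 10·|w − w′|. -/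
lemma alphaCoef_nonneg (i k : ℕ) (hk : 1 ≤ k) : 0 ≤ alphaCoef i k := by
  unfold alphaCoef
  rcases le_or_gt k i with h | h
  · rw [Finset.prod_eq_zero (i := k) (by simp [Finset.mem_Icc, hk, h])]
    rw [div_self (by positivity : ((k:ℝ)) ≠ 0)]; ring
  · apply Finset.prod_nonneg
    intro l hl
    simp only [Finset.mem_Icc] at hl
    have : (l:ℝ) / k ≤ 1 := by
      rw [div_le_one (by positivity)]
      exact_mod_cast le_of_lt (lt_of_le_of_lt hl.2 h)
    linarith

lemma alphaCoef_le_one (i k : ℕ) (hk : 1 ≤ k) : alphaCoef i k ≤ 1 := by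
  unfold alphaCoef
  rcases le_or_gt k i with h | h
  · rw [Finset.prod_eq_zero (i := k) (by simp [Finset.mem_Icc, hk, h])]
    · norm_num
    · rw [div_self (by positivity : ((k:ℝ)) ≠ 0)]; ring
  · apply Finset.prod_le_one
    · intro l hl
      simp only [Finset.mem_Icc] at hl
      have : (l:ℝ) / k ≤ 1 := by
        rw [div_le_one (by positivity)]
        exact_mod_cast le_of_lt (lt_of_le_of_lt hl.2 h)
      linarith
    · intro l hl
      have : 0 ≤ (l:ℝ) / k := by positivity
      linarith

lemma pow_diff_le (x y : ℂ) (hx : ‖x‖ ≤ 3/2) (hy : ‖y‖ ≤ 3/2) (n : ℕ) :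
    ‖x ^ n - y ^ n‖ ≤ n * (3/2) ^ (n - 1) * ‖x - y‖ := by
  induction n with
  | zero => simp
  | succ m ih =>
    have key : x ^ (m+1) - y ^ (m+1) = x ^ m * (x - y) + (x ^ m - y ^ m) * y := by ring
    rw [key]
    calc ‖x ^ m * (x - y) + (x ^ m - y ^ m) * y‖
        ≤ ‖x ^ m * (x - y)‖ + ‖(x ^ m - y ^ m) * y‖ :=
          norm_add_le _ _
      _ = ‖x‖ ^ m * ‖x - y‖ +
            ‖x ^ m - y ^ m‖ * ‖y‖ := by
          rw [norm_mul, norm_mul, norm_pow]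
      _ ≤ (3/2) ^ m * ‖x - y‖ +
            (m * (3/2) ^ (m - 1) * ‖x - y‖) * (3/2) := by
          gcongr
      _ ≤ (m + 1 : ℕ) * (3/2) ^ ((m + 1) - 1) * ‖x - y‖ := by
          rcases Nat.eq_zero_or_pos m with hm | hm
          · subst hm; simp
          · have h1 : (3/2:ℝ) ^ (m-1) * (3/2) = (3/2) ^ m := by
              rw [← pow_succ]; congr 1; omega
            have : (m:ℝ) * (3/2) ^ (m-1) * ‖x - y‖ * (3/2)
                = m * ((3/2)^(m-1) * (3/2)) * ‖x - y‖ := by ring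
            rw [this, h1]
            push_cast
            nlinarith [norm_nonneg (x - y), pow_nonneg (by norm_num : (0:ℝ) ≤ 3/2) m]

lemma disc_bounds (w : ℂ) (hw : ‖w - 1‖ ≤ 1/2) :
    1/2 ≤ ‖w‖ ∧ ‖w‖ ≤ 3/2 ∧ w ≠ 0 := by
  have h1 : ‖w‖ ≤ 3/2 := by
    calc ‖w‖ = ‖(w - 1) + 1‖ := by ring_nf
      _ ≤ ‖w - 1‖ + ‖1‖ := norm_add_le _ _
      _ ≤ 3/2 := by simp; linarith
  have h3 : ‖1 - w‖ = ‖w - 1‖ := by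
    rw [← norm_neg]; ring_nf
  have h2 : 1/2 ≤ ‖w‖ := by
    have t : ‖(1:ℂ)‖ ≤ ‖1 - w‖ + ‖w‖ :=
      calc ‖(1:ℂ)‖ = ‖(1 - w) + w‖ := by ring_nf
        _ ≤ _ := norm_add_le _ _
    simp only [norm_one] at t
    rw [h3] at t
    linarith
  exact ⟨h2, h1, fun h => by simp [h] at h2; norm_num at h2⟩

lemma zpow_diff_le (w w' : ℂ) (hw : ‖w - 1‖ ≤ 1/2)
    (hw' : ‖w' - 1‖ ≤ 1/2) (i : ℕ) :
    ‖w ^ (-(i:ℤ)) - w' ^ (-(i:ℤ))‖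
      ≤ (i * (3/2) ^ (i-1) * ‖w - w'‖) * (4 ^ i) := by
  obtain ⟨hlo, hhi, hne⟩ := disc_bounds w hw
  obtain ⟨hlo', hhi', hne'⟩ := disc_bounds w' hw'
  have key : w ^ (-(i:ℤ)) - w' ^ (-(i:ℤ)) = (w' ^ i - w ^ i) * (w ^ i)⁻¹ * (w' ^ i)⁻¹ := by
    rw [zpow_neg, zpow_neg, zpow_natCast, zpow_natCast]
    field_simp
  rw [key, norm_mul, norm_mul, norm_inv, norm_inv, norm_pow, norm_pow]
  have hinv : (‖w‖ ^ i)⁻¹ ≤ 2 ^ i := by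
    rw [← inv_pow]
    apply pow_le_pow_left₀ (by positivity)
    rw [inv_le_comm₀ (by linarith) (by norm_num)]
    linarith
  have hinv' : (‖w'‖ ^ i)⁻¹ ≤ 2 ^ i := by
    rw [← inv_pow]
    apply pow_le_pow_left₀ (by positivity)
    rw [inv_le_comm₀ (by linarith) (by norm_num)]
    linarith
  have hd : ‖w' ^ i - w ^ i‖ ≤ i * (3/2) ^ (i-1) * ‖w - w'‖ := by
    have := pow_diff_le w' w hhi' hhi i
    rwa [show ‖w' - w‖ = ‖w - w'‖ by
      rw [← norm_neg]; ring_nf] at this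
  calc ‖w' ^ i - w ^ i‖ * (‖w‖ ^ i)⁻¹ * (‖w'‖ ^ i)⁻¹
      ≤ (i * (3/2) ^ (i-1) * ‖w - w'‖) * 2 ^ i * 2 ^ i := by
        gcongr <;> positivity
    _ = (i * (3/2) ^ (i-1) * ‖w - w'‖) * (4 ^ i) := by
        rw [show (4:ℝ) = 2 * 2 by norm_num, mul_pow]; ring

lemma exp_ge_two (j : ℕ) : 2 * (j + 1) ≤ (j + 2) * ((j + 2) + 1) / 2 - 1 := by
  obtain ⟨m, hm⟩ := Nat.even_mul_succ_self j
  have h2 : (j + 2) * ((j + 2) + 1) = m + m + 4 * j + 6 := by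
    have : (j + 2) * ((j + 2) + 1) = j * (j + 1) + 4 * j + 6 := by ring
    omega
  rw [h2]; omega

lemma exp_ge_one (j : ℕ) : j ≤ (j + 1) * ((j + 1) + 1) / 2 - 1 := by
  obtain ⟨m, hm⟩ := Nat.even_mul_succ_self j
  have h2 : (j + 1) * ((j + 1) + 1) = m + m + 2 * j + 2 := by
    have : (j + 1) * ((j + 1) + 1) = j * (j + 1) + 2 * j + 2 := by ring
    omega
  rw [h2]; omega

lemma geo_bound (j : ℕ) :
    ((2 * ((j:ℝ) + 2) + 2) * 6 ^ (j + 2)) * (1/400 : ℝ) ^ (j + 1) ≤ 7 * (1/5 : ℝ) ^ (j + 1) := by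
  have hj : (j : ℝ) + 1 ≤ 2 ^ j := by
    exact_mod_cast Nat.lt_two_pow_self (n := j)
  have h1 : (2 * ((j:ℝ) + 2) + 2) ≤ 6 * 2 ^ j := by nlinarith
  have hmul : (2:ℝ) ^ j * 6 ^ j * (1/400 : ℝ) ^ j = (3/100) ^ j := by
    rw [← mul_pow, ← mul_pow]; norm_num
  calc ((2 * ((j:ℝ) + 2) + 2) * 6 ^ (j + 2)) * (1/400 : ℝ) ^ (j + 1)
      ≤ (6 * 2 ^ j * 6 ^ (j + 2)) * (1/400 : ℝ) ^ (j + 1) := by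
        gcongr
    _ = (216/400) * ((2:ℝ) ^ j * 6 ^ j * (1/400 : ℝ) ^ j) := by
        rw [pow_add, pow_add]; ring
    _ = (216/400) * (3/100 : ℝ) ^ j := by rw [hmul]
    _ ≤ (216/400) * (1/5 : ℝ) ^ j :=
        mul_le_mul_of_nonneg_left
          (pow_le_pow_left₀ (by norm_num) (by norm_num) j) (by norm_num)
    _ ≤ 7 * (1/5 : ℝ) ^ (j + 1) := by
        rw [pow_succ]
        nlinarith [pow_nonneg (by norm_num : (0:ℝ) ≤ 1/5) j]

lemma Fterm_diff_bound (k : ℕ) (hk : 1 ≤ k) (q : ℂ) (hq : ‖q‖ ≤ 1/20)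
    (w w' : ℂ) (hw : ‖w - 1‖ ≤ 1/2) (hw' : ‖w' - 1‖ ≤ 1/2) (j : ℕ) :
    ‖Fterm k w q (j+1) - Fterm k w' q (j+1)‖
      ≤ 7 * (1/5 : ℝ) ^ j * ‖w - w'‖ := by
  obtain ⟨hlo, hhi, hne⟩ := disc_bounds w hw
  obtain ⟨hlo', hhi', hne'⟩ := disc_bounds w' hw'
  set i := j + 1 with hi
  set d := ‖w - w'‖ with hd
  have hd0 : 0 ≤ d := norm_nonneg _
  set e := i * (i + 1) / 2 - 1 with he
  have key : Fterm k w q i - Fterm k w' q i =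
      (-1 : ℂ) ^ i * ((alphaCoef i k : ℂ) * (w ^ (-(i:ℤ)) - w' ^ (-(i:ℤ)))
        - (alphaNegInv i k : ℂ) * (w ^ (i+1) - w' ^ (i+1))) * q ^ e := by
    unfold Fterm; rw [← he]; ring
  rw [key, norm_mul, norm_mul]
  have h1 : ‖(-1 : ℂ) ^ i‖ = 1 := by simp
  rw [h1, one_mul]
  have hα0 := alphaCoef_nonneg i k hk
  have hα1 := alphaCoef_le_one i k hk
  have hβ0 := alphaNegInv_nonneg i k
  have hβ1 := alphaNegInv_le_one i k
  have hΔ1 := zpow_diff_le w w' hw hw' i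
  have hΔ2 : ‖w ^ (i+1) - w' ^ (i+1)‖ ≤ ((i:ℝ)+1) * (3/2) ^ i * d := by
    have := pow_diff_le w w' hhi hhi' (i+1)
    simpa using this
  have hinner : ‖(alphaCoef i k : ℂ) * (w ^ (-(i:ℤ)) - w' ^ (-(i:ℤ)))
        - (alphaNegInv i k : ℂ) * (w ^ (i+1) - w' ^ (i+1))‖
      ≤ ((i:ℝ) * (3/2) ^ (i-1) * d) * 4 ^ i + ((i:ℝ)+1) * (3/2) ^ i * d := by
    calc ‖_‖
        ≤ ‖(alphaCoef i k : ℂ) * (w ^ (-(i:ℤ)) - w' ^ (-(i:ℤ)))‖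
          + ‖(alphaNegInv i k : ℂ) * (w ^ (i+1) - w' ^ (i+1))‖ := by
          have := norm_add_le ((alphaCoef i k : ℂ) * (w ^ (-(i:ℤ)) - w' ^ (-(i:ℤ))))
            (-((alphaNegInv i k : ℂ) * (w ^ (i+1) - w' ^ (i+1))))
          simpa [sub_eq_add_neg] using this
      _ ≤ ((i:ℝ) * (3/2) ^ (i-1) * d) * 4 ^ i + ((i:ℝ)+1) * (3/2) ^ i * d := by
          rw [norm_mul, norm_mul, Complex.norm_real, Complex.norm_real,
            Real.norm_of_nonneg hα0, Real.norm_of_nonneg hβ0]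
          have t1 : alphaCoef i k * ‖w ^ (-(i:ℤ)) - w' ^ (-(i:ℤ))‖
              ≤ ((i:ℝ) * (3/2) ^ (i-1) * d) * 4 ^ i := by
            calc _ ≤ 1 * ‖w ^ (-(i:ℤ)) - w' ^ (-(i:ℤ))‖ := by
                  apply mul_le_mul_of_nonneg_right hα1 (norm_nonneg _)
              _ = _ := one_mul _
              _ ≤ _ := hΔ1
          have t2 : alphaNegInv i k * ‖w ^ (i+1) - w' ^ (i+1)‖
              ≤ ((i:ℝ)+1) * (3/2) ^ i * d := by
            calc _ ≤ 1 * ‖w ^ (i+1) - w' ^ (i+1)‖ := by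
                  apply mul_le_mul_of_nonneg_right hβ1 (norm_nonneg _)
              _ = _ := one_mul _
              _ ≤ _ := hΔ2
          linarith
  have hq' : ‖q ^ e‖ ≤ (1/20 : ℝ) ^ e := by
    rw [norm_pow]
    exact pow_le_pow_left₀ (norm_nonneg _) hq e
  have step : ‖(alphaCoef i k : ℂ) * (w ^ (-(i:ℤ)) - w' ^ (-(i:ℤ)))
        - (alphaNegInv i k : ℂ) * (w ^ (i+1) - w' ^ (i+1))‖ * ‖q ^ e‖
      ≤ (((i:ℝ) * (3/2) ^ (i-1) * d) * 4 ^ i + ((i:ℝ)+1) * (3/2) ^ i * d) * (1/20 : ℝ) ^ e := by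
    apply mul_le_mul hinner hq' (norm_nonneg _)
    positivity
  refine le_trans step ?_
  -- now pure real arithmetic
  rcases Nat.eq_zero_or_pos j with hj | hj
  · subst hj
    have : e = 0 := by norm_num [he, hi]
    rw [this]
    norm_num [hi]
    nlinarith
  · obtain ⟨j', rfl⟩ : ∃ j', j = j' + 1 := ⟨j - 1, by omega⟩
    have hie : i = j' + 2 := by omega
    have hee : 2 * (j' + 1) ≤ e := by rw [he, hie]; exact exp_ge_two j'
    have hq2 : (1/20 : ℝ) ^ e ≤ (1/400 : ℝ) ^ (j' + 1) := by
      have h20 : (1/20 : ℝ) ^ e ≤ (1/20 : ℝ) ^ (2 * (j' + 1)) :=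
        pow_le_pow_of_le_one (by norm_num) (by norm_num) hee
      have : ((1:ℝ)/20) ^ (2 * (j' + 1)) = (1/400) ^ (j' + 1) := by
        rw [pow_mul]; norm_num
      linarith
    have hAB : ((i:ℝ) * (3/2) ^ (i-1) * d) * 4 ^ i + ((i:ℝ)+1) * (3/2) ^ i * d
        ≤ ((2 * ((j':ℝ) + 2) + 2) * 6 ^ (j' + 2)) * d := by
      have e1 : ((3:ℝ)/2) ^ (i-1) ≤ (3/2) ^ i :=
        pow_le_pow_right₀ (by norm_num) (Nat.sub_le i 1)
      have e2 : ((3:ℝ)/2) ^ i * 4 ^ i = 6 ^ i := by rw [← mul_pow]; norm_num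
      have e3 : ((3:ℝ)/2) ^ i ≤ 6 ^ i := pow_le_pow_left₀ (by norm_num) (by norm_num) i
      have hcast : (i:ℝ) = (j':ℝ) + 2 := by rw [hie]; push_cast; ring
      have p1 : ((i:ℝ) * (3/2) ^ (i-1) * d) * 4 ^ i ≤ (i:ℝ) * 6 ^ i * d := by
        calc ((i:ℝ) * (3/2) ^ (i-1) * d) * 4 ^ i ≤ ((i:ℝ) * (3/2) ^ i * d) * 4 ^ i := by
              gcongr
          _ = (i:ℝ) * ((3/2) ^ i * 4 ^ i) * d := by ring
          _ = (i:ℝ) * 6 ^ i * d := by rw [e2]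
      have p2 : ((i:ℝ)+1) * (3/2) ^ i * d ≤ ((i:ℝ)+1) * 6 ^ i * d := by gcongr
      have : (i:ℝ) * 6 ^ i * d + ((i:ℝ)+1) * 6 ^ i * d
          = ((2 * (i:ℝ) + 1) * 6 ^ i) * d := by ring
      rw [hie] at p1 p2 ⊢
      push_cast at p1 p2 ⊢
      nlinarith [pow_nonneg (by norm_num : (0:ℝ) ≤ 6) (j' + 2)]
    calc (((i:ℝ) * (3/2) ^ (i-1) * d) * 4 ^ i + ((i:ℝ)+1) * (3/2) ^ i * d) * (1/20 : ℝ) ^ e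
        ≤ (((2 * ((j':ℝ) + 2) + 2) * 6 ^ (j' + 2)) * d) * (1/400 : ℝ) ^ (j' + 1) := by
          apply mul_le_mul hAB hq2 (by positivity) (by positivity)
      _ = (((2 * ((j':ℝ) + 2) + 2) * 6 ^ (j' + 2)) * (1/400 : ℝ) ^ (j' + 1)) * d := by ring
      _ ≤ (7 * (1/5 : ℝ) ^ (j' + 1)) * d := by
          apply mul_le_mul_of_nonneg_right (geo_bound j') hd0
      _ = 7 * (1/5 : ℝ) ^ (j' + 1) * d := by ring

lemma Fterm_abs_bound (k : ℕ) (hk : 1 ≤ k) (q : ℂ) (hq : ‖q‖ ≤ 1/20)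
    (w : ℂ) (hw : ‖w - 1‖ ≤ 1/2) (j : ℕ) :
    ‖Fterm k w q (j+1)‖ ≤ 6 * (1/10 : ℝ) ^ j := by
  obtain ⟨hlo, hhi, hne⟩ := disc_bounds w hw
  set i := j + 1 with hi
  set e := i * (i + 1) / 2 - 1 with he
  unfold Fterm
  rw [← he, norm_mul, norm_mul]
  have h1 : ‖(-1 : ℂ) ^ i‖ = 1 := by simp
  rw [h1, one_mul]
  have hα0 := alphaCoef_nonneg i k hk
  have hα1 := alphaCoef_le_one i k hk
  have hβ0 := alphaNegInv_nonneg i k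
  have hβ1 := alphaNegInv_le_one i k
  have hz : ‖w ^ (-(i:ℤ))‖ ≤ 2 ^ i := by
    rw [zpow_neg, zpow_natCast, norm_inv, norm_pow, ← inv_pow]
    apply pow_le_pow_left₀ (by positivity)
    rw [inv_le_comm₀ (by linarith) (by norm_num)]
    linarith
  have hp : ‖w ^ (i+1)‖ ≤ 2 ^ (i+1) := by
    rw [norm_pow]
    apply pow_le_pow_left₀ (norm_nonneg _)
    linarith
  have hinner : ‖(alphaCoef i k : ℂ) * w ^ (-(i:ℤ))
      - (alphaNegInv i k : ℂ) * w ^ (i+1)‖ ≤ 3 * 2 ^ i := by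
    calc ‖_‖
        ≤ ‖(alphaCoef i k : ℂ) * w ^ (-(i:ℤ))‖
          + ‖(alphaNegInv i k : ℂ) * w ^ (i+1)‖ := by
          have := norm_add_le ((alphaCoef i k : ℂ) * w ^ (-(i:ℤ)))
            (-((alphaNegInv i k : ℂ) * w ^ (i+1)))
          simpa [sub_eq_add_neg] using this
      _ ≤ 2 ^ i + 2 ^ (i+1) := by
          rw [norm_mul, norm_mul, Complex.norm_real, Complex.norm_real,
            Real.norm_of_nonneg hα0, Real.norm_of_nonneg hβ0]
          have t1 : alphaCoef i k * ‖w ^ (-(i:ℤ))‖ ≤ 2 ^ i := by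
            calc _ ≤ 1 * ‖w ^ (-(i:ℤ))‖ :=
                  mul_le_mul_of_nonneg_right hα1 (norm_nonneg _)
              _ = _ := one_mul _
              _ ≤ _ := hz
          have t2 : alphaNegInv i k * ‖w ^ (i+1)‖ ≤ 2 ^ (i+1) := by
            calc _ ≤ 1 * ‖w ^ (i+1)‖ :=
                  mul_le_mul_of_nonneg_right hβ1 (norm_nonneg _)
              _ = _ := one_mul _
              _ ≤ _ := hp
          linarith
      _ = 3 * 2 ^ i := by rw [pow_succ]; ring
  have hq' : ‖q ^ e‖ ≤ (1/20 : ℝ) ^ j := by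
    rw [norm_pow]
    calc ‖q‖ ^ e ≤ (1/20 : ℝ) ^ e :=
          pow_le_pow_left₀ (norm_nonneg _) hq e
      _ ≤ (1/20 : ℝ) ^ j := by
          apply pow_le_pow_of_le_one (by norm_num) (by norm_num)
          rw [he, hi]; exact exp_ge_one j
  calc ‖(alphaCoef i k : ℂ) * w ^ (-(i:ℤ))
        - (alphaNegInv i k : ℂ) * w ^ (i+1)‖ * ‖q ^ e‖
      ≤ (3 * 2 ^ i) * (1/20 : ℝ) ^ j := by
        apply mul_le_mul hinner hq' (norm_nonneg _) (by positivity)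
    _ = 6 * ((2:ℝ) ^ j * (1/20) ^ j) := by rw [hi, pow_succ]; ring
    _ = 6 * (1/10 : ℝ) ^ j := by rw [← mul_pow]; norm_num

theorem stmt11 (k : ℕ) (hk : 1 ≤ k) (q : ℂ) (hq : ‖q‖ ≤ 1 / 20)
    (w w' : ℂ) (hw : ‖w - 1‖ ≤ 1 / 2) (hw' : ‖w' - 1‖ ≤ 1 / 2) :
    ‖FK k w q - FK k w' q‖ ≤ 10 * ‖w - w'‖ := by
  have hgeo : Summable (fun j : ℕ => 6 * (1/10 : ℝ) ^ j) :=
    (summable_geometric_of_lt_one (by norm_num) (by norm_num)).mul_left 6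
  have hsum : Summable (fun j : ℕ => Fterm k w q (j+1)) := by
    apply Summable.of_norm_bounded hgeo
    intro j
    exact Fterm_abs_bound k hk q hq w hw j
  have hsum' : Summable (fun j : ℕ => Fterm k w' q (j+1)) := by
    apply Summable.of_norm_bounded hgeo
    intro j
    exact Fterm_abs_bound k hk q hq w' hw' j
  set d := ‖w - w'‖ with hd
  have hd0 : 0 ≤ d := norm_nonneg _
  have hFK : FK k w q - FK k w' q = ∑' j : ℕ, (Fterm k w q (j+1) - Fterm k w' q (j+1)) := by
    rw [FK, FK, Summable.tsum_sub hsum hsum']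
  rw [hFK]
  have hg : HasSum (fun j : ℕ => 7 * (1/5 : ℝ) ^ j * d) (7 * (1 - 1/5 : ℝ)⁻¹ * d) := by
    have := (hasSum_geometric_of_lt_one (by norm_num : (0:ℝ) ≤ 1/5)
      (by norm_num : (1/5:ℝ) < 1)).mul_left 7
    simpa [mul_assoc] using this.mul_right d
  have hb : ∀ j : ℕ, ‖Fterm k w q (j+1) - Fterm k w' q (j+1)‖ ≤ 7 * (1/5 : ℝ) ^ j * d := by
    intro j
    exact Fterm_diff_bound k hk q hq w w' hw hw' j
  have := tsum_of_norm_bounded hg hb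
  calc ‖∑' j : ℕ, (Fterm k w q (j+1) - Fterm k w' q (j+1))‖
      ≤ 7 * (1 - 1/5 : ℝ)⁻¹ * d := this
    _ ≤ 10 * d := by nlinarith
end
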